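/- arXiv:1907.05138 — 2 statements merged into one kernel-verified Lean document; each statement's English description precedes it below -/
import Mathlib

section
/- Consider the random directed multigraph model on N nodes with offspring PGF μ, and for 1 ≤ k ≤ N let q_k be the probability that the out-component of node 0 has exactly k nodes. For every M with 1 ≤ M ≤ N: [μ((M-1)/(N-1))]^M = ∑_{k=1}^{M} q_k · [μ((M-1)/(N-1))]^{M-k} · ( C(M-1,k-1) / C(N-1,k-1) ), where C(n,r) denotes the binomial coefficient. -/
open scoped Classical

/-- The weight (probability) of a realization `g` of the random directed multigraph on
`N` nodes: independently for each node `u`, its out-degree `ℓ` is drawn from the pmf `p`,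
and then `ℓ` out-neighbors are drawn independently uniformly from the `N - 1` nodes
other than `u` (with replacement). -/
noncomputable def graphWeight (N : ℕ) (p : ℕ → ℝ) (g : Fin N → List (Fin N)) : ℝ :=
  ∏ u : Fin N,
    if ∀ v ∈ g u, v ≠ u then
      p (g u).length * (1 / ((N : ℝ) - 1)) ^ (g u).length
    else 0

/-- Probability of an event in the random directed multigraph model. -/
noncomputable def graphProb (N : ℕ) (p : ℕ → ℝ) (E : Set (Fin N → List (Fin N))) : ℝ :=
  ∑' g : Fin N → List (Fin N), Set.indicator E (graphWeight N p) g

/-- The out-component of node `0`: the set of nodes reachable from node `0`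
(including node `0` itself) following directed edges. -/
def outComp (N : ℕ) (hN : 0 < N) (g : Fin N → List (Fin N)) : Set (Fin N) :=
  {v | Relation.ReflTransGen (fun a b => b ∈ g a) ⟨0, hN⟩ v}

/-- `qProb N hN p k` is the probability that the out-component of node `0` has exactly
`k` nodes. -/
noncomputable def qProb (N : ℕ) (hN : 0 < N) (p : ℕ → ℝ) (k : ℕ) : ℝ :=
  graphProb N p {g | (outComp N hN g).ncard = k}

open ENNReal

namespace FSB

/-- indicator of a proposition -/
noncomputable def I (P : Prop) : ℝ≥0∞ := if P then 1 else 0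

lemma I_le_one (P : Prop) : I P ≤ 1 := by unfold I; split <;> simp

lemma I_congr {P Q : Prop} (h : P ↔ Q) : I P = I Q := by unfold I; rw [if_congr h rfl rfl]

lemma I_pos {P : Prop} (h : P) : I P = 1 := by unfold I; rw [if_pos h]

lemma I_neg {P : Prop} (h : ¬ P) : I P = 0 := by unfold I; rw [if_neg h]

lemma ite_eq_I {P : Prop} [h : Decidable P] (x : ℝ≥0∞) : (if P then x else 0) = I P * x := by
  unfold I
  by_cases hp : P
  · rw [if_pos hp, if_pos hp, one_mul]
  · rw [if_neg hp, if_neg hp, zero_mul]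

lemma I_and (P Q : Prop) : I (P ∧ Q) = I P * I Q := by
  unfold I
  by_cases hp : P <;> by_cases hq : Q <;> simp [hp, hq]



lemma prod_split {ι : Type} [Fintype ι] (P : ι → Prop) [inst1 : Fintype {x // P x}]
    [inst2 : Fintype {x // ¬ P x}] (h : ι → ℝ≥0∞) :
    ∏ i, h i = (∏ x : {x // P x}, h x.1) * ∏ x : {x // ¬ P x}, h x.1 := by
  rw [Subsingleton.elim inst1 (Subtype.fintype P), Subsingleton.elim inst2 (Subtype.fintype _)]
  exact (Fintype.prod_subtype_mul_prod_subtype P h).symm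

/-- Split a tsum over a Pi type along a predicate. -/
lemma tsum_split {α : Type} {ι : Type} (P : ι → Prop)
    (F : ({x : ι // P x} → α) → ℝ≥0∞) (G : ({x : ι // ¬ P x} → α) → ℝ≥0∞) :
    ∑' g : ι → α, F (fun i => g i.1) * G (fun i => g i.1)
      = (∑' h, F h) * (∑' h, G h) := by
  have h1 : ∑' g : ι → α, F (fun i => g i.1) * G (fun i => g i.1)
      = ∑' q : ({x : ι // P x} → α) × ({x : ι // ¬ P x} → α), F q.1 * G q.2 :=
    Equiv.tsum_eq (Equiv.piEquivPiSubtypeProd P (fun _ => α)) (fun q => F q.1 * G q.2)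
  rw [h1, ENNReal.tsum_prod']
  simp_rw [ENNReal.tsum_mul_left, ENNReal.tsum_mul_right]

lemma tsum_pi_prod {α : Type} : ∀ (n : ℕ) (ι : Type) [Fintype ι], Fintype.card ι = n →
    ∀ f : ι → α → ℝ≥0∞, ∑' g : ι → α, ∏ i, f i (g i) = ∏ i, ∑' a, f i a := by
  intro n
  induction n with
  | zero =>
    intro ι _ hcard f
    have : IsEmpty ι := Fintype.card_eq_zero_iff.mp hcard
    have hu : Unique (ι → α) := ⟨⟨fun i => (this.elim i)⟩, fun g => funext fun i => (this.elim i)⟩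
    rw [tsum_eq_single (hu.default) (fun b hb => absurd (hu.uniq b) hb)]
    simp
  | succ n ih =>
    intro ι _ hcard f
    have : Nonempty ι := Fintype.card_pos_iff.mp (by omega)
    obtain ⟨i0⟩ := this
    letI hu : Unique {x : ι // x = i0} := ⟨⟨⟨i0, rfl⟩⟩, fun y => Subtype.ext y.2⟩
    have hcard' : Fintype.card {x : ι // ¬ x = i0} = n := by
      have h1 : Fintype.card {x : ι // x = i0} = 1 := Fintype.card_subtype_eq i0
      have := Fintype.card_subtype_compl (fun x : ι => x = i0)
      omega
    calc ∑' g : ι → α, ∏ i, f i (g i)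
        = ∑' g : ι → α, (fun h : {x : ι // x = i0} → α => ∏ x, f x.1 (h x)) (fun x => g x.1)
            * (fun h : {x : ι // ¬ x = i0} → α => ∏ x, f x.1 (h x)) (fun x => g x.1) :=
          tsum_congr fun g => prod_split (fun x => x = i0) (fun i => f i (g i))
      _ = (∑' h : {x : ι // x = i0} → α, ∏ x, f x.1 (h x))
            * (∑' h : {x : ι // ¬ x = i0} → α, ∏ x, f x.1 (h x)) :=
          tsum_split (fun x => x = i0) (fun h => ∏ x, f x.1 (h x)) (fun h => ∏ x, f x.1 (h x))
      _ = (∑' a : α, f i0 a) * ∏ x : {x : ι // ¬ x = i0}, ∑' a, f x.1 a := by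
          rw [ih _ hcard' (fun x a => f x.1 a)]
          congr 1
          have h2 : ∀ h : {x : ι // x = i0} → α, (∏ x, f x.1 (h x)) = f i0 (h default) :=
            fun h => Fintype.prod_unique (fun x : {x : ι // x = i0} => f x.1 (h x))
          simp_rw [h2]
          exact Equiv.tsum_eq (Equiv.funUnique {x : ι // x = i0} α) (fun a => f i0 a)
      _ = ∏ i, ∑' a, f i a := by
          rw [prod_split (fun x => x = i0) (fun i => ∑' a, f i a)]
          congr 1
          exact (Fintype.prod_unique (fun x : {x : ι // x = i0} => ∑' a, f x.1 a)).symm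

lemma tsum_pi {ι : Type} [Fintype ι] {α : Type} (f : ι → α → ℝ≥0∞) :
    ∑' g : ι → α, ∏ i, f i (g i) = ∏ i, ∑' a, f i a :=
  tsum_pi_prod (Fintype.card ι) ι rfl f

/-- Sum over lists with all entries in `S`. -/
lemma tsum_list {γ : Type} [Fintype γ] (S : Finset γ) (q : ℕ → ℝ≥0∞) (c : ℝ≥0∞) :
    ∑' l : List γ, I (∀ v ∈ l, v ∈ S) * (q l.length * c ^ l.length)
      = ∑' n, q n * ((S.card : ℝ≥0∞) * c) ^ n := by
  rw [← Equiv.tsum_eq List.equivSigmaTuple.symm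
    (fun l => I (∀ v ∈ l, v ∈ S) * (q l.length * c ^ l.length))]
  rw [ENNReal.tsum_sigma']
  refine tsum_congr fun n => ?_
  have key : ∀ v : Fin n → γ,
      I (∀ x ∈ List.ofFn v, x ∈ S) * (q (List.ofFn v).length * c ^ (List.ofFn v).length)
      = q n * ∏ i : Fin n, (if v i ∈ S then c else 0) := by
    intro v
    rw [List.length_ofFn]
    by_cases h : ∀ i, v i ∈ S
    · rw [I, if_pos (by simpa [List.forall_mem_ofFn_iff] using h), one_mul]
      rw [Finset.prod_congr rfl (fun i _ => if_pos (h i)), Finset.prod_const]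
      simp [Finset.card_univ]
    · rw [I, if_neg (by simpa [List.forall_mem_ofFn_iff] using h), zero_mul]
      push_neg at h
      obtain ⟨i, hi⟩ := h
      rw [Finset.prod_eq_zero (Finset.mem_univ i)
        (show (if v i ∈ S then c else (0:ℝ≥0∞)) = 0 from if_neg hi), mul_zero]
  simp only [List.equivSigmaTuple_symm_apply]
  calc ∑' v : Fin n → γ, I (∀ x ∈ List.ofFn v, x ∈ S)
          * (q (List.ofFn v).length * c ^ (List.ofFn v).length)
      = ∑' v : Fin n → γ, q n * ∏ i : Fin n, (if v i ∈ S then c else 0) :=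
        tsum_congr key
    _ = q n * ∏ i : Fin n, ∑' a : γ, (if a ∈ S then c else 0) := by
        rw [ENNReal.tsum_mul_left, tsum_pi (fun (_ : Fin n) (a : γ) => if a ∈ S then c else 0)]
    _ = q n * ((S.card : ℝ≥0∞) * c) ^ n := by
        congr 1
        rw [Finset.prod_const, Finset.card_univ, Fintype.card_fin]
        congr 1
        rw [tsum_fintype]
        rw [Finset.sum_ite_mem, Finset.univ_inter, Finset.sum_const, nsmul_eq_mul]

/-- Number of `k`-subsets of `s` containing a fixed element `a`. -/
lemma card_subsets_mem {γ : Type} [DecidableEq γ] (s : Finset γ) (a : γ) (ha : a ∈ s)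
    (k : ℕ) (hk : 1 ≤ k) :
    ((s.powerset.filter fun C => a ∈ C ∧ C.card = k)).card = (s.card - 1).choose (k - 1) := by
  rw [← Finset.card_erase_of_mem ha, ← Finset.card_powersetCard (k-1) (s.erase a)]
  refine Finset.card_nbij' (fun C => C.erase a) (fun D => insert a D) ?_ ?_ ?_ ?_
  · intro C hC
    simp only [Finset.mem_coe, Finset.mem_filter, Finset.mem_powerset] at hC
    obtain ⟨hCs, haC, hCk⟩ := hC
    rw [Finset.mem_coe, Finset.mem_powersetCard]
    exact ⟨Finset.erase_subset_erase a hCs, by rw [Finset.card_erase_of_mem haC, hCk]⟩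
  · intro D hD
    rw [Finset.mem_coe, Finset.mem_powersetCard] at hD
    obtain ⟨hDs, hDk⟩ := hD
    have haD : a ∉ D := fun h => (Finset.mem_erase.mp (hDs h)).1 rfl
    simp only [Finset.mem_coe, Finset.mem_filter, Finset.mem_powerset]
    refine ⟨Finset.insert_subset ha (hDs.trans (Finset.erase_subset a s)), Finset.mem_insert_self a D, ?_⟩
    rw [Finset.card_insert_of_notMem haD, hDk]
    omega
  · intro C hC
    simp only [Finset.mem_coe, Finset.mem_filter, Finset.mem_powerset] at hC
    exact Finset.insert_erase hC.2.1
  · intro D hD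
    rw [Finset.mem_coe, Finset.mem_powersetCard] at hD
    have haD : a ∉ D := fun h => (Finset.mem_erase.mp (hD.1 h)).1 rfl
    exact Finset.erase_insert haD

/-- There is a permutation fixing `a` and carrying `C` onto `C'`. -/
lemma exists_perm {γ : Type} [Fintype γ] [DecidableEq γ] (a : γ) (C C' : Finset γ)
    (hC : a ∈ C) (hC' : a ∈ C') (hcard : C.card = C'.card) :
    ∃ π : Equiv.Perm γ, π a = a ∧ ∀ x, π x ∈ C' ↔ x ∈ C := by
  have key : ∀ D : Finset γ,
      Fintype.card {y : {x : γ // x ≠ a} // (y : γ) ∈ D} = (D.erase a).card := by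
    intro D
    have e : {y : {x : γ // x ≠ a} // (y : γ) ∈ D} ≃ {x : γ // x ∈ D.erase a} :=
      { toFun := fun y => ⟨y.1.1, Finset.mem_erase.mpr ⟨y.1.2, y.2⟩⟩
        invFun := fun z => ⟨⟨z.1, (Finset.mem_erase.mp z.2).1⟩, (Finset.mem_erase.mp z.2).2⟩
        left_inv := fun y => rfl
        right_inv := fun z => rfl }
    rw [Fintype.card_congr e]
    exact Fintype.card_coe (D.erase a)
  have h1 : Fintype.card {y : {x : γ // x ≠ a} // (y : γ) ∈ C}
      = Fintype.card {y : {x : γ // x ≠ a} // (y : γ) ∈ C'} := by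
    rw [key, key, Finset.card_erase_of_mem hC, Finset.card_erase_of_mem hC', hcard]
  have h2 : Fintype.card {y : {x : γ // x ≠ a} // ¬ (y : γ) ∈ C}
      = Fintype.card {y : {x : γ // x ≠ a} // ¬ (y : γ) ∈ C'} := by
    have hb := Fintype.card_subtype_compl (fun y : {x : γ // x ≠ a} => (y : γ) ∈ C)
    have hb' := Fintype.card_subtype_compl (fun y : {x : γ // x ≠ a} => (y : γ) ∈ C')
    rw [hb, hb', h1]
  let e := Fintype.equivOfCardEq h1
  let f := Fintype.equivOfCardEq h2
  let σ : Equiv.Perm {x : γ // x ≠ a} := Equiv.subtypeCongr e f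
  have hσ : ∀ y : {x : γ // x ≠ a}, ((σ y : {x : γ // x ≠ a}) : γ) ∈ C' ↔ (y : γ) ∈ C := by
    intro y
    by_cases hy : (y : γ) ∈ C
    · have : σ y = (e ⟨y, hy⟩ : {x : γ // x ≠ a}) := by
        simp [σ, Equiv.subtypeCongr, hy]
      rw [this]
      simpa [hy] using (e ⟨y, hy⟩).2
    · have : σ y = (f ⟨y, hy⟩ : {x : γ // x ≠ a}) := by
        simp [σ, Equiv.subtypeCongr, hy]
      rw [this]
      simpa [hy] using (f ⟨y, hy⟩).2
  refine ⟨Equiv.Perm.subtypeCongr σ (Equiv.refl {x : γ // ¬ x ≠ a}), ?_, ?_⟩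
  · exact Equiv.Perm.subtypeCongr.right_apply σ _ (by simp)
  · intro x
    by_cases hx : x ≠ a
    · rw [Equiv.Perm.subtypeCongr.left_apply σ _ hx]
      exact hσ ⟨x, hx⟩
    · push_neg at hx
      subst hx
      rw [Equiv.Perm.subtypeCongr.right_apply σ _ (by simp)]
      simpa using ⟨fun _ => hC, fun _ => hC'⟩





variable {N : ℕ} (hN : 0 < N)

lemma self_mem_outComp (g : Fin N → List (Fin N)) : (⟨0, hN⟩ : Fin N) ∈ outComp N hN g :=
  Relation.ReflTransGen.refl

lemma outComp_closed {g : Fin N → List (Fin N)} {u v : Fin N} (hu : u ∈ outComp N hN g)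
    (hv : v ∈ g u) : v ∈ outComp N hN g :=
  Relation.ReflTransGen.tail hu hv

/-- The event `outComp = C` only depends on the coordinates in `C`. -/
lemma outComp_congr {C : Finset (Fin N)} {g g' : Fin N → List (Fin N)}
    (hagree : ∀ u ∈ C, g u = g' u) (h : outComp N hN g = ↑C) : outComp N hN g' = ↑C := by
  have hmem : ∀ u, u ∈ outComp N hN g ↔ u ∈ C := by
    intro u; rw [h]; exact Finset.mem_coe
  have h0 : (⟨0, hN⟩ : Fin N) ∈ C := (hmem _).mp (self_mem_outComp hN g)
  have hC : ∀ u ∈ C, ∀ v ∈ g u, v ∈ C := fun u hu v hv =>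
    (hmem v).mp (outComp_closed hN ((hmem u).mpr hu) hv)
  ext v
  simp only [Finset.coe_sort_coe, Finset.mem_coe]
  constructor
  · intro hv
    induction hv with
    | refl => exact h0
    | tail _ step ih =>
      rename_i b c _
      rw [← hagree b ih] at step
      exact hC b ih c step
  · intro hv
    have main : ∀ u, u ∈ outComp N hN g → u ∈ outComp N hN g' := by
      intro u hu
      induction hu with
      | refl => exact Relation.ReflTransGen.refl
      | tail hbc step ih =>
        rename_i b c
        have hb : b ∈ C := (hmem b).mp hbc
        rw [hagree b hb] at step
        exact Relation.ReflTransGen.tail ih step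
    exact main v ((hmem v).mpr hv)

/-- Action of a permutation on graph realizations. -/
def permAct (π : Equiv.Perm (Fin N)) (g : Fin N → List (Fin N)) : Fin N → List (Fin N) :=
  fun u => (g (π.symm u)).map π

lemma mem_permAct (π : Equiv.Perm (Fin N)) (g : Fin N → List (Fin N)) (a b : Fin N) :
    b ∈ permAct π g a ↔ π.symm b ∈ g (π.symm a) := by
  simp only [permAct, List.mem_map]
  constructor
  · rintro ⟨x, hx, rfl⟩; simpa using hx
  · intro h; exact ⟨π.symm b, h, by simp⟩

/-- `permAct` as an equivalence. -/
def permActEquiv (π : Equiv.Perm (Fin N)) :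
    (Fin N → List (Fin N)) ≃ (Fin N → List (Fin N)) where
  toFun := permAct π
  invFun := permAct π.symm
  left_inv g := by
    funext u
    simp [permAct, List.map_map]
  right_inv g := by
    funext u
    simp [permAct, List.map_map]

lemma rtg_conj {α : Type} (e : Equiv.Perm α) (R : α → α → Prop) (x y : α) :
    Relation.ReflTransGen (fun a b => R (e a) (e b)) x y ↔ Relation.ReflTransGen R (e x) (e y) := by
  constructor
  · intro h
    exact Relation.ReflTransGen.lift e (fun a b hab => hab) _ _ h
  · intro h
    have := Relation.ReflTransGen.lift (r := R) (p := fun a b => R (e a) (e b)) e.symm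
      (fun a b hab => by simpa [Function.onFun] using hab) _ _ h
    simpa [Function.onFun] using this

lemma mem_outComp_permAct (π : Equiv.Perm (Fin N)) (hπ0 : π ⟨0, hN⟩ = ⟨0, hN⟩)
    (g : Fin N → List (Fin N)) (v : Fin N) :
    v ∈ outComp N hN (permAct π g) ↔ π.symm v ∈ outComp N hN g := by
  have hz : π.symm ⟨0, hN⟩ = ⟨0, hN⟩ := (Equiv.symm_apply_eq π).mpr hπ0.symm
  show Relation.ReflTransGen _ _ _ ↔ Relation.ReflTransGen _ _ _
  have hrel : (fun a b => b ∈ permAct π g a)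
      = fun a b => (fun a' b' => b' ∈ g a') (π.symm a) (π.symm b) := by
    funext a b
    exact propext (mem_permAct π g a b)
  rw [hrel]
  rw [rtg_conj π.symm (fun a' b' => b' ∈ g a') _ v]
  rw [hz]

lemma outComp_permAct_eq (π : Equiv.Perm (Fin N)) (hπ0 : π ⟨0, hN⟩ = ⟨0, hN⟩)
    (C C' : Finset (Fin N)) (hπ : ∀ x, π x ∈ C' ↔ x ∈ C) (g : Fin N → List (Fin N)) :
    outComp N hN (permAct π g) = ↑C' ↔ outComp N hN g = ↑C := by
  rw [Set.ext_iff, Set.ext_iff]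
  constructor
  · intro h u
    have := h (π u)
    rw [mem_outComp_permAct hN π hπ0] at this
    simp only [Equiv.symm_apply_apply, Finset.mem_coe] at this
    rw [Finset.mem_coe, ← hπ u]
    exact this
  · intro h v
    rw [mem_outComp_permAct hN π hπ0, Finset.mem_coe]
    have h1 := h (π.symm v)
    have h2 := hπ (π.symm v)
    simp only [Equiv.apply_symm_apply] at h2
    rw [Finset.mem_coe] at h1
    rw [h1, h2]



lemma prod_ind {ι : Type} [Fintype ι] (Q R : ι → Prop) [DecidablePred Q] :
    ∏ i, (if Q i then I (R i) else 1) = I (∀ i, Q i → R i) := by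
  by_cases h : ∀ i, Q i → R i
  · rw [I, if_pos h]
    refine Finset.prod_eq_one fun i _ => ?_
    by_cases hq : Q i
    · rw [if_pos hq, I, if_pos (h i hq)]
    · rw [if_neg hq]
  · rw [I, if_neg h]
    push_neg at h
    obtain ⟨i, hq, hr⟩ := h
    exact Finset.prod_eq_zero (Finset.mem_univ i) (by rw [if_pos hq, I, if_neg hr])

noncomputable def w (N : ℕ) (p : ℕ → ℝ) (u : Fin N) (l : List (Fin N)) : ℝ≥0∞ :=
  ENNReal.ofReal (if ∀ v ∈ l, v ≠ u then p l.length * (1 / ((N : ℝ) - 1)) ^ l.length else 0)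

noncomputable def W (N : ℕ) (p : ℕ → ℝ) (g : Fin N → List (Fin N)) : ℝ≥0∞ :=
  ∏ u, w N p u (g u)

lemma W_ne_top (N : ℕ) (p : ℕ → ℝ) (g : Fin N → List (Fin N)) : W N p g ≠ ∞ :=
  ENNReal.prod_ne_top fun u _ => ENNReal.ofReal_ne_top

/-- inverse of N-1 as ENNReal -/
noncomputable def cinv (N : ℕ) : ℝ≥0∞ := (((N - 1 : ℕ)) : ℝ≥0∞)⁻¹

section main

variable {N : ℕ}

lemma cast_sub_one (hN : 2 ≤ N) : ((N : ℝ) - 1) = ((N - 1 : ℕ) : ℝ) := by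
  have : (1:ℕ) ≤ N := by omega
  rw [Nat.cast_sub this, Nat.cast_one]

lemma cast_pos (hN : 2 ≤ N) : (0:ℝ) < (N : ℝ) - 1 := by
  have : (2:ℝ) ≤ (N:ℝ) := by exact_mod_cast hN
  linarith

lemma ofReal_inv_N (hN : 2 ≤ N) : ENNReal.ofReal (1 / ((N : ℝ) - 1)) = cinv N := by
  rw [one_div, ENNReal.ofReal_inv_of_pos (cast_pos hN), cast_sub_one hN,
    ENNReal.ofReal_natCast, cinv]

variable (p : ℕ → ℝ)

lemma w_eq (hN : 2 ≤ N) (hp0 : ∀ ℓ, 0 ≤ p ℓ) (u : Fin N) (l : List (Fin N)) :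
    w N p u l = I (∀ v ∈ l, v ∈ Finset.univ.erase u)
      * (ENNReal.ofReal (p l.length) * (cinv N) ^ l.length) := by
  have hcond : (∀ v ∈ l, v ≠ u) ↔ (∀ v ∈ l, v ∈ Finset.univ.erase u) := by
    constructor <;> intro h v hv
    · exact Finset.mem_erase.mpr ⟨h v hv, Finset.mem_univ v⟩
    · exact (Finset.mem_erase.mp (h v hv)).1
  rw [w, apply_ite ENNReal.ofReal, ENNReal.ofReal_zero, if_congr hcond rfl rfl, ite_eq_I]
  congr 1
  rw [ENNReal.ofReal_mul (hp0 _), ENNReal.ofReal_pow (by have := cast_pos hN; positivity),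
    ofReal_inv_N hN]

lemma ofReal_graphWeight (hN : 2 ≤ N) (hp0 : ∀ ℓ, 0 ≤ p ℓ) (g : Fin N → List (Fin N)) :
    ENNReal.ofReal (graphWeight N p g) = W N p g := by
  rw [graphWeight, ENNReal.ofReal_prod_of_nonneg]
  · rfl
  · intro u _
    split
    · have h1 : (0:ℝ) < (N:ℝ) - 1 := cast_pos hN
      have h2 : (0:ℝ) ≤ p (g u).length := hp0 _
      positivity
    · exact le_refl 0

lemma graphWeight_nonneg (hN : 2 ≤ N) (hp0 : ∀ ℓ, 0 ≤ p ℓ) (g : Fin N → List (Fin N)) :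
    0 ≤ graphWeight N p g := by
  refine Finset.prod_nonneg fun u _ => ?_
  split
  · have h1 : (0:ℝ) < (N:ℝ) - 1 := cast_pos hN
    have h2 : (0:ℝ) ≤ p (g u).length := hp0 _
    positivity
  · exact le_refl 0

/-- Bridge between real probability and the ENNReal sum. -/
lemma graphProb_eq (hN : 2 ≤ N) (hp0 : ∀ ℓ, 0 ≤ p ℓ) (E : Set (Fin N → List (Fin N))) :
    graphProb N p E = (∑' g, W N p g * I (g ∈ E)).toReal := by
  rw [ENNReal.tsum_toReal_eq (fun g => ENNReal.mul_ne_top (W_ne_top N p g)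
    (lt_of_le_of_lt (I_le_one _) (by norm_num)).ne)]
  rw [graphProb]
  refine tsum_congr fun g => ?_
  by_cases hg : g ∈ E
  · rw [Set.indicator_of_mem hg, I, if_pos hg, mul_one, ← ofReal_graphWeight p hN hp0,
      ENNReal.toReal_ofReal (graphWeight_nonneg p hN hp0 g)]
  · rw [Set.indicator_of_notMem hg, I, if_neg hg, mul_zero, ENNReal.toReal_zero]



lemma summable_p (hpsum : ∑' ℓ, p ℓ = 1) : Summable p := by
  by_contra h
  rw [tsum_eq_zero_of_not_summable h] at hpsum
  exact one_ne_zero hpsum.symm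

lemma tsum_ofReal_p (hp0 : ∀ ℓ, 0 ≤ p ℓ) (hpsum : ∑' ℓ, p ℓ = 1) :
    ∑' n, ENNReal.ofReal (p n) = 1 := by
  rw [← ENNReal.ofReal_tsum_of_nonneg hp0 (summable_p p hpsum), hpsum, ENNReal.ofReal_one]

lemma node_total (hN : 2 ≤ N) (hp0 : ∀ ℓ, 0 ≤ p ℓ) (hpsum : ∑' ℓ, p ℓ = 1) (u : Fin N) :
    ∑' l, w N p u l = 1 := by
  calc ∑' l, w N p u l
      = ∑' l : List (Fin N), I (∀ v ∈ l, v ∈ Finset.univ.erase u)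
          * (ENNReal.ofReal (p l.length) * (cinv N) ^ l.length) :=
        tsum_congr fun l => w_eq p hN hp0 u l
    _ = ∑' n, ENNReal.ofReal (p n) * (((Finset.univ.erase u).card : ℝ≥0∞) * cinv N) ^ n :=
        tsum_list (Finset.univ.erase u) (fun n => ENNReal.ofReal (p n)) (cinv N)
    _ = 1 := by
        have hc : (((Finset.univ.erase u).card : ℕ) : ℝ≥0∞) * cinv N = 1 := by
          rw [Finset.card_erase_of_mem (Finset.mem_univ u), Finset.card_univ, Fintype.card_fin,
            cinv]
          exact ENNReal.mul_inv_cancel (Nat.cast_ne_zero.mpr (by omega)) (ENNReal.natCast_ne_top _)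
        simp only [hc, one_pow, mul_one]
        exact tsum_ofReal_p p hp0 hpsum

lemma tsum_W (hN : 2 ≤ N) (hp0 : ∀ ℓ, 0 ≤ p ℓ) (hpsum : ∑' ℓ, p ℓ = 1) :
    ∑' g : Fin N → List (Fin N), W N p g = 1 := by
  calc ∑' g : Fin N → List (Fin N), W N p g
      = ∑' g : Fin N → List (Fin N), ∏ u, w N p u (g u) := rfl
    _ = ∏ u, ∑' l, w N p u l := tsum_pi (w N p)
    _ = 1 := Finset.prod_eq_one fun u _ => node_total p hN hp0 hpsum u

/-- the set of "first M" nodes -/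
def AF (N M : ℕ) : Finset (Fin N) := Finset.univ.filter (fun u => (u:ℕ) < M)

lemma mem_AF {M : ℕ} {u : Fin N} : u ∈ AF N M ↔ (u:ℕ) < M := by
  simp [AF]

lemma card_AF (M : ℕ) (hMN : M ≤ N) : (AF N M).card = M := by
  have h : (AF N M).card = (Finset.range M).card := by
    apply Finset.card_nbij (i := Fin.val)
    · intro a ha
      simp only [AF, Finset.coe_filter, Finset.mem_univ, true_and, Set.mem_setOf_eq] at ha
      simpa using ha
    · exact Fin.val_injective.injOn
    · intro j hj
      simp only [Finset.coe_range, Set.mem_Iio] at hj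
      exact ⟨⟨j, lt_of_lt_of_le hj hMN⟩, by simp [AF, hj], rfl⟩
  rw [h, Finset.card_range]

noncomputable def θE (N : ℕ) (p : ℕ → ℝ) (M : ℕ) : ℝ≥0∞ :=
  ∑' n, ENNReal.ofReal (p n) * ((((M - 1 : ℕ)) : ℝ≥0∞) * cinv N) ^ n

lemma node_totalA (hN : 2 ≤ N) (hp0 : ∀ ℓ, 0 ≤ p ℓ) {M : ℕ} (hMN : M ≤ N)
    (u : Fin N) (hu : (u:ℕ) < M) :
    ∑' l : List (Fin N), w N p u l * I (∀ v ∈ l, (v:ℕ) < M) = θE N p M := by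
  have key : ∀ l : List (Fin N), w N p u l * I (∀ v ∈ l, (v:ℕ) < M)
      = I (∀ v ∈ l, v ∈ (AF N M).erase u)
          * (ENNReal.ofReal (p l.length) * (cinv N) ^ l.length) := by
    intro l
    rw [w_eq p hN hp0 u l]
    rw [mul_comm (I (∀ v ∈ l, v ∈ Finset.univ.erase u)) _, mul_assoc, ← I_and]
    rw [mul_comm _ (I _)]
    refine congrArg₂ _ (I_congr ?_) rfl
    constructor
    · rintro ⟨h1, h2⟩ v hv
      exact Finset.mem_erase.mpr ⟨(Finset.mem_erase.mp (h1 v hv)).1, mem_AF.mpr (h2 v hv)⟩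
    · intro h
      refine ⟨fun v hv => Finset.mem_erase.mpr ⟨(Finset.mem_erase.mp (h v hv)).1,
          Finset.mem_univ v⟩,
        fun v hv => mem_AF.mp (Finset.mem_erase.mp (h v hv)).2⟩
  rw [tsum_congr key,
    tsum_list ((AF N M).erase u) (fun n => ENNReal.ofReal (p n)) (cinv N)]
  have hcard : ((AF N M).erase u).card = M - 1 := by
    rw [Finset.card_erase_of_mem (mem_AF.mpr hu), card_AF M hMN]
  rw [hcard, θE]


noncomputable def PC (p : ℕ → ℝ) (hN0 : 0 < N) (C : Finset (Fin N)) : ℝ≥0∞ :=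
  ∑' g : Fin N → List (Fin N), W N p g * I (outComp N hN0 g = ↑C)

lemma PC_le_one (hN : 2 ≤ N) (hp0 : ∀ ℓ, 0 ≤ p ℓ) (hpsum : ∑' ℓ, p ℓ = 1)
    (hN0 : 0 < N) (C : Finset (Fin N)) : PC p hN0 C ≤ 1 := by
  rw [PC, ← tsum_W p hN hp0 hpsum]
  refine ENNReal.tsum_le_tsum fun g => ?_
  calc W N p g * I _ ≤ W N p g * 1 := mul_le_mul_right (I_le_one _) _
    _ = W N p g := mul_one _

lemma W_permAct (π : Equiv.Perm (Fin N)) (g : Fin N → List (Fin N)) :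
    W N p (permAct π g) = W N p g := by
  have key : ∀ u, w N p u (permAct π g u) = w N p (π.symm u) (g (π.symm u)) := by
    intro u
    rw [w, w, permAct]
    simp only [List.length_map]
    congr 1
    refine if_congr ?_ rfl rfl
    constructor
    · intro h v hv hvu
      exact h (π v) (List.mem_map_of_mem (f := π) hv) (by rw [hvu, Equiv.apply_symm_apply])
    · intro h v hv hvu
      obtain ⟨x, hx, rfl⟩ := List.mem_map.mp hv
      exact h x hx (by rw [← hvu, Equiv.symm_apply_apply])
  calc W N p (permAct π g) = ∏ u, w N p (π.symm u) (g (π.symm u)) :=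
        Finset.prod_congr rfl (fun u _ => key u)
    _ = ∏ u, w N p u (g u) := Equiv.prod_comp π.symm (fun u => w N p u (g u))
    _ = W N p g := rfl

/-- Exchangeability: the probability that the out-component equals `C` only depends
on the cardinality of `C`. -/
lemma PC_congr (hN0 : 0 < N) (C C' : Finset (Fin N)) (hC : (⟨0, hN0⟩ : Fin N) ∈ C)
    (hC' : (⟨0, hN0⟩ : Fin N) ∈ C') (hcard : C.card = C'.card) :
    PC p hN0 C' = PC p hN0 C := by
  obtain ⟨π, hπ0, hπ⟩ := exists_perm (⟨0, hN0⟩ : Fin N) C C' hC hC' hcard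
  calc PC p hN0 C' = ∑' g : Fin N → List (Fin N), W N p g * I (outComp N hN0 g = ↑C') := rfl
    _ = ∑' g : Fin N → List (Fin N),
          W N p (permActEquiv π g) * I (outComp N hN0 (permActEquiv π g) = ↑C') :=
        (Equiv.tsum_eq (permActEquiv π)
          (fun g => W N p g * I (outComp N hN0 g = ↑C'))).symm
    _ = ∑' g : Fin N → List (Fin N), W N p g * I (outComp N hN0 g = ↑C) := by
        refine tsum_congr fun g => ?_
        have h1 : permActEquiv π g = permAct π g := rfl
        rw [h1, W_permAct p π g]
        exact congrArg₂ _ rfl (I_congr (outComp_permAct_eq hN0 π hπ0 C C' hπ g))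
    _ = PC p hN0 C := rfl

/-- the collection of `k`-subsets containing node 0 -/
noncomputable def SS (N : ℕ) (hN0 : 0 < N) (k : ℕ) : Finset (Finset (Fin N)) :=
  Finset.univ.powerset.filter (fun C => (⟨0, hN0⟩ : Fin N) ∈ C ∧ C.card = k)

lemma I_ncard_decomp (hN0 : 0 < N) (k : ℕ) (g : Fin N → List (Fin N)) :
    I ((outComp N hN0 g).ncard = k) = ∑ C ∈ SS N hN0 k, I (outComp N hN0 g = ↑C) := by
  by_cases hg : (outComp N hN0 g).ncard = k
  · rw [I, if_pos hg]
    have hfin : (outComp N hN0 g).Finite := Set.toFinite _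
    set C₀ := hfin.toFinset with hC₀def
    have hC₀ : ↑C₀ = outComp N hN0 g := Set.Finite.coe_toFinset hfin
    rw [Finset.sum_eq_single_of_mem C₀ ?memb ?others]
    · rw [I, if_pos hC₀.symm]
    case memb =>
      rw [SS, Finset.mem_filter, Finset.mem_powerset]
      refine ⟨Finset.subset_univ _, hfin.mem_toFinset.mpr (self_mem_outComp hN0 g), ?_⟩
      rw [← hg, Set.ncard_eq_toFinset_card _ hfin]
    case others =>
      intro C _ hne
      rw [I, if_neg]
      intro heq
      exact hne (Finset.coe_injective (by rw [← heq, hC₀]))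
  · rw [I, if_neg hg]
    refine (Finset.sum_eq_zero fun C hC => ?_).symm
    rw [I, if_neg]
    intro heq
    apply hg
    rw [heq, Set.ncard_coe_finset]
    rw [SS, Finset.mem_filter] at hC
    exact hC.2.2

lemma q_decomp (hN0 : 0 < N) (k : ℕ) :
    (∑' g : Fin N → List (Fin N), W N p g * I ((outComp N hN0 g).ncard = k))
      = ∑ C ∈ SS N hN0 k, PC p hN0 C := by
  calc ∑' g : Fin N → List (Fin N), W N p g * I ((outComp N hN0 g).ncard = k)
      = ∑' g : Fin N → List (Fin N), ∑ C ∈ SS N hN0 k, W N p g * I (outComp N hN0 g = ↑C) :=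
        tsum_congr fun g => by rw [I_ncard_decomp hN0 k g, Finset.mul_sum]
    _ = ∑ C ∈ SS N hN0 k, ∑' g : Fin N → List (Fin N), W N p g * I (outComp N hN0 g = ↑C) :=
        Summable.tsum_finsetSum (fun C _ => ENNReal.summable)
    _ = ∑ C ∈ SS N hN0 k, PC p hN0 C := rfl

lemma card_SS (hN0 : 0 < N) (k : ℕ) (hk : 1 ≤ k) :
    (SS N hN0 k).card = (N - 1).choose (k - 1) := by
  rw [SS]
  have := card_subsets_mem (Finset.univ : Finset (Fin N)) (⟨0, hN0⟩ : Fin N)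
    (Finset.mem_univ _) k hk
  rw [Finset.card_univ, Fintype.card_fin] at this
  exact this

lemma mem_AF_zero {M : ℕ} (hN0 : 0 < N) (hM : 1 ≤ M) : (⟨0, hN0⟩ : Fin N) ∈ AF N M :=
  mem_AF.mpr (show 0 < M by omega)

lemma q_eq_choose (hN0 : 0 < N) (k : ℕ) (hk : 1 ≤ k) (hkN : k ≤ N) :
    (∑' g : Fin N → List (Fin N), W N p g * I ((outComp N hN0 g).ncard = k))
      = ((N - 1).choose (k - 1) : ℝ≥0∞) * PC p hN0 (AF N k) := by
  rw [q_decomp p hN0 k]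
  have hconst : ∀ C ∈ SS N hN0 k, PC p hN0 C = PC p hN0 (AF N k) := by
    intro C hC
    rw [SS, Finset.mem_filter] at hC
    exact (PC_congr p hN0 C (AF N k) hC.2.1 (mem_AF_zero hN0 hk)
      (by rw [hC.2.2, card_AF k hkN])).symm
  rw [Finset.sum_congr rfl hconst, Finset.sum_const, card_SS hN0 k hk, nsmul_eq_mul]


noncomputable def locNode (N M : ℕ) (u : Fin N) (l : List (Fin N)) : ℝ≥0∞ :=
  if (u:ℕ) < M then I (∀ v ∈ l, (v:ℕ) < M) else 1

lemma node_loc (hN : 2 ≤ N) (hp0 : ∀ ℓ, 0 ≤ p ℓ) (hpsum : ∑' ℓ, p ℓ = 1) {M : ℕ}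
    (hMN : M ≤ N) (u : Fin N) :
    ∑' l : List (Fin N), w N p u l * locNode N M u l
      = if (u:ℕ) < M then θE N p M else 1 := by
  by_cases hu : (u:ℕ) < M
  · rw [if_pos hu]
    calc ∑' l : List (Fin N), w N p u l * locNode N M u l
        = ∑' l : List (Fin N), w N p u l * I (∀ v ∈ l, (v:ℕ) < M) :=
          tsum_congr fun l => by rw [locNode, if_pos hu]
      _ = θE N p M := node_totalA p hN hp0 hMN u hu
  · rw [if_neg hu]
    calc ∑' l : List (Fin N), w N p u l * locNode N M u l
        = ∑' l : List (Fin N), w N p u l :=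
          tsum_congr fun l => by rw [locNode, if_neg hu, mul_one]
      _ = 1 := node_total p hN hp0 hpsum u

lemma lhs_factor (hN : 2 ≤ N) (hp0 : ∀ ℓ, 0 ≤ p ℓ) (hpsum : ∑' ℓ, p ℓ = 1) {M : ℕ}
    (hMN : M ≤ N) :
    ∑' g : Fin N → List (Fin N), ∏ u, (w N p u (g u) * locNode N M u (g u))
      = θE N p M ^ M := by
  rw [tsum_pi (fun u l => w N p u l * locNode N M u l)]
  rw [Finset.prod_congr rfl (fun u _ => node_loc p hN hp0 hpsum hMN u)]
  rw [← Finset.prod_filter (fun u : Fin N => (u:ℕ) < M) (fun _ => θE N p M)]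
  rw [Finset.prod_const]
  rw [show Finset.univ.filter (fun u : Fin N => (u:ℕ) < M) = AF N M from rfl, card_AF M hMN]

/-- the event that every node of `AF` points only into `AF` -/
def Egood (N M : ℕ) (g : Fin N → List (Fin N)) : Prop :=
  ∀ u : Fin N, (u:ℕ) < M → ∀ v ∈ g u, (v:ℕ) < M

/-- the event that every node of `AF \ C` points only into `AF` -/
def tailP (N M : ℕ) (C : Finset (Fin N)) (g : Fin N → List (Fin N)) : Prop :=
  ∀ u : Fin N, (u:ℕ) < M → u ∉ C → ∀ v ∈ g u, (v:ℕ) < M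

lemma prod_locNode (M : ℕ) (g : Fin N → List (Fin N)) :
    ∏ u, locNode N M u (g u) = I (Egood N M g) := by
  unfold locNode Egood
  exact prod_ind (fun u : Fin N => (u:ℕ) < M) (fun u => ∀ v ∈ g u, (v:ℕ) < M)

lemma pointwise_W (M : ℕ) (g : Fin N → List (Fin N)) :
    ∏ u, (w N p u (g u) * locNode N M u (g u)) = W N p g * I (Egood N M g) := by
  rw [Finset.prod_mul_distrib, prod_locNode M g, W]

lemma outComp_lt_of_Egood (hN0 : 0 < N) {M : ℕ} (hM1 : 1 ≤ M) {g : Fin N → List (Fin N)}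
    (hg : Egood N M g) : ∀ x ∈ outComp N hN0 g, (x:ℕ) < M := by
  intro x hx
  induction hx with
  | refl => exact (show 0 < M by omega)
  | tail _ step ih =>
    rename_i b c _
    exact hg b ih c step

/-- the collection of subsets of `AF` containing node 0 -/
noncomputable def DD (N M : ℕ) (hN0 : 0 < N) : Finset (Finset (Fin N)) :=
  (AF N M).powerset.filter (fun C => (⟨0, hN0⟩ : Fin N) ∈ C)

lemma I_E_decomp (hN0 : 0 < N) {M : ℕ} (hM1 : 1 ≤ M) (g : Fin N → List (Fin N)) :
    I (Egood N M g) = ∑ C ∈ DD N M hN0,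
      I (outComp N hN0 g = ↑C) * I (tailP N M C g) := by
  by_cases hg : Egood N M g
  · rw [I, if_pos hg]
    have hfin : (outComp N hN0 g).Finite := Set.toFinite _
    set C₀ := hfin.toFinset with hC₀def
    have hC₀ : ↑C₀ = outComp N hN0 g := Set.Finite.coe_toFinset hfin
    rw [Finset.sum_eq_single_of_mem C₀ ?memb ?others]
    · rw [I_pos hC₀.symm, I_pos (show tailP N M C₀ g from fun u hu _ hv => hg u hu hv), mul_one]
    case memb =>
      rw [DD, Finset.mem_filter, Finset.mem_powerset]
      constructor
      · intro x hx
        exact mem_AF.mpr (outComp_lt_of_Egood hN0 hM1 hg x (hfin.mem_toFinset.mp hx))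
      · exact hfin.mem_toFinset.mpr (self_mem_outComp hN0 g)
    case others =>
      intro C _ hne
      rw [I_neg (show ¬ outComp N hN0 g = ↑C from fun heq =>
        hne (Finset.coe_injective (by rw [← heq, hC₀]))), zero_mul]
  · rw [I_neg hg]
    refine (Finset.sum_eq_zero fun C hC => ?_).symm
    rw [DD, Finset.mem_filter, Finset.mem_powerset] at hC
    by_cases h1 : outComp N hN0 g = ↑C
    · have htail : ¬ tailP N M C g := by
        intro htail
        apply hg
        intro u hu v hv
        by_cases huC : u ∈ C
        · have hv2 : v ∈ outComp N hN0 g :=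
            outComp_closed hN0 (by rw [h1]; exact Finset.mem_coe.mpr huC) hv
          rw [h1] at hv2
          exact mem_AF.mp (hC.1 (Finset.mem_coe.mp hv2))
        · exact htail u hu huC v hv
      rw [I_neg htail, mul_zero]
    · rw [I_neg h1, zero_mul]

/-- extend a partial realization on `C` by empty lists -/
noncomputable def extC (C : Finset (Fin N)) (h : {x : Fin N // x ∈ C} → List (Fin N)) :
    Fin N → List (Fin N) := fun u => if hu : u ∈ C then h ⟨u, hu⟩ else []

lemma I_outComp_cyl (hN0 : 0 < N) (C : Finset (Fin N)) (g : Fin N → List (Fin N)) :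
    I (outComp N hN0 g = ↑C) = I (outComp N hN0 (extC C (fun x => g x.1)) = ↑C) := by
  have hag : ∀ u ∈ C, g u = extC C (fun x : {x : Fin N // x ∈ C} => g x.1) u := by
    intro u hu
    simp [extC, hu]
  refine I_congr ⟨fun h => outComp_congr hN0 hag h,
    fun h => outComp_congr hN0 (fun u hu => (hag u hu).symm) h⟩

lemma I_tailP (M : ℕ) (C : Finset (Fin N)) (g : Fin N → List (Fin N)) :
    I (tailP N M C g) = ∏ x : {x : Fin N // ¬ x ∈ C}, locNode N M x.1 (g x.1) := by
  rw [show (∏ x : {x : Fin N // ¬ x ∈ C}, locNode N M x.1 (g x.1))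
    = ∏ x : {x : Fin N // ¬ x ∈ C}, (if (x.1:ℕ) < M then I (∀ v ∈ g x.1, (v:ℕ) < M) else 1)
    from rfl]
  rw [prod_ind (fun x : {x : Fin N // ¬ x ∈ C} => (x.1:ℕ) < M)
    (fun x => ∀ v ∈ g x.1, (v:ℕ) < M)]
  refine I_congr ⟨fun h x hQ => h x.1 hQ x.2, fun h u hu huC => h ⟨u, huC⟩ hu⟩


lemma T_factor (hN : 2 ≤ N) (hp0 : ∀ ℓ, 0 ≤ p ℓ) (hpsum : ∑' ℓ, p ℓ = 1) (hN0 : 0 < N)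
    {M : ℕ} (hMN : M ≤ N) (C : Finset (Fin N)) (hCsub : C ⊆ AF N M) :
    ∑' g : Fin N → List (Fin N), W N p g * (I (outComp N hN0 g = ↑C) * I (tailP N M C g))
      = PC p hN0 C * θE N p M ^ (M - C.card) := by
  have hW : ∀ g : Fin N → List (Fin N), W N p g
      = (∏ x : {x : Fin N // x ∈ C}, w N p x.1 (g x.1))
        * ∏ x : {x : Fin N // ¬ x ∈ C}, w N p x.1 (g x.1) :=
    fun g => prod_split (fun x => x ∈ C) (fun u => w N p u (g u))
  have hPC : PC p hN0 C = ∑' h : {x : Fin N // x ∈ C} → List (Fin N),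
      (∏ x : {x : Fin N // x ∈ C}, w N p x.1 (h x)) * I (outComp N hN0 (extC C h) = ↑C) := by
    calc PC p hN0 C
        = ∑' g : Fin N → List (Fin N), W N p g * I (outComp N hN0 g = ↑C) := rfl
      _ = ∑' g : Fin N → List (Fin N),
            ((∏ x : {x : Fin N // x ∈ C}, w N p x.1 (g x.1))
              * I (outComp N hN0 (extC C (fun x : {x : Fin N // x ∈ C} => g x.1)) = ↑C))
            * ∏ x : {x : Fin N // ¬ x ∈ C}, w N p x.1 (g x.1) := by
          refine tsum_congr fun g => ?_
          rw [hW g, I_outComp_cyl hN0 C g]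
          ring
      _ = (∑' h : {x : Fin N // x ∈ C} → List (Fin N),
            (∏ x : {x : Fin N // x ∈ C}, w N p x.1 (h x))
              * I (outComp N hN0 (extC C h) = ↑C))
          * (∑' h : {x : Fin N // ¬ x ∈ C} → List (Fin N),
              ∏ x : {x : Fin N // ¬ x ∈ C}, w N p x.1 (h x)) :=
          tsum_split (fun x : Fin N => x ∈ C)
            (fun h => (∏ x : {x : Fin N // x ∈ C}, w N p x.1 (h x))
              * I (outComp N hN0 (extC C h) = ↑C))
            (fun h => ∏ x : {x : Fin N // ¬ x ∈ C}, w N p x.1 (h x))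
      _ = _ := by
          rw [tsum_pi (fun (x : {x : Fin N // ¬ x ∈ C}) l => w N p x.1 l),
            Finset.prod_eq_one (fun x _ => node_total p hN hp0 hpsum x.1), mul_one]
  have hGval : (∑' h : {x : Fin N // ¬ x ∈ C} → List (Fin N),
      ∏ x : {x : Fin N // ¬ x ∈ C}, (w N p x.1 (h x) * locNode N M x.1 (h x)))
      = θE N p M ^ (M - C.card) := by
    rw [tsum_pi (fun (x : {x : Fin N // ¬ x ∈ C}) l => w N p x.1 l * locNode N M x.1 l)]
    rw [Finset.prod_congr rfl (fun x _ => node_loc p hN hp0 hpsum hMN x.1)]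
    rw [← Finset.prod_filter (fun x : {x : Fin N // ¬ x ∈ C} => ((x.1:Fin N):ℕ) < M)
      (fun _ => θE N p M), Finset.prod_const]
    congr 1
    have h1 : (Finset.univ.filter (fun x : {x : Fin N // ¬ x ∈ C} => ((x.1:Fin N):ℕ) < M)).card
        = Fintype.card {y : {x : Fin N // ¬ x ∈ C} // ((y.1:Fin N):ℕ) < M} :=
      (Fintype.card_subtype _).symm
    have e : {y : {x : Fin N // ¬ x ∈ C} // ((y.1:Fin N):ℕ) < M}
        ≃ {x : Fin N // x ∈ AF N M \ C} :=
      { toFun := fun y => ⟨y.1.1, Finset.mem_sdiff.mpr ⟨mem_AF.mpr y.2, y.1.2⟩⟩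
        invFun := fun z => ⟨⟨z.1, (Finset.mem_sdiff.mp z.2).2⟩,
          mem_AF.mp (Finset.mem_sdiff.mp z.2).1⟩
        left_inv := fun y => rfl
        right_inv := fun z => rfl }
    rw [h1, Fintype.card_congr e, Fintype.card_coe, Finset.card_sdiff_of_subset hCsub, card_AF M hMN]
  calc ∑' g : Fin N → List (Fin N), W N p g * (I (outComp N hN0 g = ↑C) * I (tailP N M C g))
      = ∑' g : Fin N → List (Fin N),
          ((∏ x : {x : Fin N // x ∈ C}, w N p x.1 (g x.1))
            * I (outComp N hN0 (extC C (fun x : {x : Fin N // x ∈ C} => g x.1)) = ↑C))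
          * ∏ x : {x : Fin N // ¬ x ∈ C}, (w N p x.1 (g x.1) * locNode N M x.1 (g x.1)) := by
        refine tsum_congr fun g => ?_
        rw [hW g, I_outComp_cyl hN0 C g, I_tailP M C g, Finset.prod_mul_distrib]
        ring
    _ = (∑' h : {x : Fin N // x ∈ C} → List (Fin N),
          (∏ x : {x : Fin N // x ∈ C}, w N p x.1 (h x))
            * I (outComp N hN0 (extC C h) = ↑C))
        * (∑' h : {x : Fin N // ¬ x ∈ C} → List (Fin N),
            ∏ x : {x : Fin N // ¬ x ∈ C}, (w N p x.1 (h x) * locNode N M x.1 (h x))) :=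
        tsum_split (fun x : Fin N => x ∈ C)
          (fun h => (∏ x : {x : Fin N // x ∈ C}, w N p x.1 (h x))
            * I (outComp N hN0 (extC C h) = ↑C))
          (fun h => ∏ x : {x : Fin N // ¬ x ∈ C}, (w N p x.1 (h x) * locNode N M x.1 (h x)))
    _ = PC p hN0 C * θE N p M ^ (M - C.card) := by rw [hPC, hGval]


lemma main_ENN (hN : 2 ≤ N) (hp0 : ∀ ℓ, 0 ≤ p ℓ) (hpsum : ∑' ℓ, p ℓ = 1) (hN0 : 0 < N)
    {M : ℕ} (hM1 : 1 ≤ M) (hMN : M ≤ N) :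
    θE N p M ^ M = ∑ k ∈ Finset.Icc 1 M,
      ((M - 1).choose (k - 1) : ℝ≥0∞) * (PC p hN0 (AF N k) * θE N p M ^ (M - k)) := by
  have hmaps : ∀ C ∈ DD N M hN0, C.card ∈ Finset.Icc 1 M := by
    intro C hC
    rw [DD, Finset.mem_filter, Finset.mem_powerset] at hC
    rw [Finset.mem_Icc]
    constructor
    · exact Finset.card_pos.mpr ⟨_, hC.2⟩
    · calc C.card ≤ (AF N M).card := Finset.card_le_card hC.1
        _ = M := card_AF M hMN
  calc θE N p M ^ M
      = ∑' g : Fin N → List (Fin N), ∏ u, (w N p u (g u) * locNode N M u (g u)) :=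
        (lhs_factor p hN hp0 hpsum hMN).symm
    _ = ∑' g : Fin N → List (Fin N), W N p g * I (Egood N M g) :=
        tsum_congr fun g => pointwise_W p M g
    _ = ∑' g : Fin N → List (Fin N), ∑ C ∈ DD N M hN0,
          W N p g * (I (outComp N hN0 g = ↑C) * I (tailP N M C g)) :=
        tsum_congr fun g => by rw [I_E_decomp hN0 hM1 g, Finset.mul_sum]
    _ = ∑ C ∈ DD N M hN0, ∑' g : Fin N → List (Fin N),
          W N p g * (I (outComp N hN0 g = ↑C) * I (tailP N M C g)) :=
        Summable.tsum_finsetSum (fun C _ => ENNReal.summable)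
    _ = ∑ C ∈ DD N M hN0, PC p hN0 C * θE N p M ^ (M - C.card) :=
        Finset.sum_congr rfl fun C hC => by
          rw [DD, Finset.mem_filter, Finset.mem_powerset] at hC
          exact T_factor p hN hp0 hpsum hN0 hMN C hC.1
    _ = ∑ C ∈ DD N M hN0, PC p hN0 (AF N C.card) * θE N p M ^ (M - C.card) :=
        Finset.sum_congr rfl fun C hC => by
          have hCIcc := hmaps C hC
          rw [Finset.mem_Icc] at hCIcc
          rw [DD, Finset.mem_filter, Finset.mem_powerset] at hC
          congr 1
          exact (PC_congr p hN0 C (AF N C.card) hC.2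
            (mem_AF_zero hN0 hCIcc.1)
            (by rw [card_AF C.card (le_trans hCIcc.2 hMN)])).symm
    _ = ∑ k ∈ Finset.Icc 1 M, ∑ C ∈ (DD N M hN0).filter (fun C => C.card = k),
          PC p hN0 (AF N C.card) * θE N p M ^ (M - C.card) :=
        (Finset.sum_fiberwise_of_maps_to hmaps
          (fun C => PC p hN0 (AF N C.card) * θE N p M ^ (M - C.card))).symm
    _ = ∑ k ∈ Finset.Icc 1 M,
          ((M - 1).choose (k - 1) : ℝ≥0∞) * (PC p hN0 (AF N k) * θE N p M ^ (M - k)) := by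
        refine Finset.sum_congr rfl fun k hk => ?_
        rw [Finset.mem_Icc] at hk
        have hconst : ∑ C ∈ (DD N M hN0).filter (fun C => C.card = k),
            PC p hN0 (AF N C.card) * θE N p M ^ (M - C.card)
            = ∑ _C ∈ (DD N M hN0).filter (fun C => C.card = k),
            PC p hN0 (AF N k) * θE N p M ^ (M - k) :=
          Finset.sum_congr rfl (fun C hC => by rw [(Finset.mem_filter.mp hC).2])
        rw [hconst, Finset.sum_const, nsmul_eq_mul]
        congr 1
        rw [DD, Finset.filter_filter]
        have := card_subsets_mem (AF N M) (⟨0, hN0⟩ : Fin N) (mem_AF_zero hN0 hM1) k hk.1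
        rw [card_AF M hMN] at this
        rw [← this]


lemma theta_eq (hN : 2 ≤ N) (hp0 : ∀ ℓ, 0 ≤ p ℓ) (hp1 : ∀ ℓ, p ℓ ≤ 1)
    (hpsum : ∑' ℓ, p ℓ = 1) (μ : ℝ → ℝ) (hμ : ∀ x, μ x = ∑' ℓ, p ℓ * x ^ ℓ)
    {M : ℕ} (hM1 : 1 ≤ M) (hMN : M ≤ N) :
    ENNReal.ofReal (μ (((M : ℝ) - 1) / ((N : ℝ) - 1))) = θE N p M := by
  set x : ℝ := ((M : ℝ) - 1) / ((N : ℝ) - 1) with hxdef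
  have hM1R : (0:ℝ) ≤ (M : ℝ) - 1 := by
    have : (1:ℝ) ≤ (M:ℝ) := by exact_mod_cast hM1
    linarith
  have hx0 : 0 ≤ x := div_nonneg hM1R (cast_pos hN).le
  have hx1 : x ≤ 1 := by
    rw [hxdef, div_le_one (cast_pos hN)]
    have : (M:ℝ) ≤ (N:ℝ) := by exact_mod_cast hMN
    linarith
  have hsumm : Summable (fun n => p n * x ^ n) := by
    refine Summable.of_nonneg_of_le (fun n => mul_nonneg (hp0 n) (pow_nonneg hx0 n))
      (fun n => ?_) (summable_p p hpsum)
    calc p n * x ^ n ≤ p n * 1 :=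
          mul_le_mul_of_nonneg_left (pow_le_one₀ hx0 hx1) (hp0 n)
      _ = p n := mul_one _
  rw [hμ x, ENNReal.ofReal_tsum_of_nonneg
    (fun n => mul_nonneg (hp0 n) (pow_nonneg hx0 n)) hsumm]
  refine tsum_congr fun n => ?_
  rw [ENNReal.ofReal_mul (hp0 n), ENNReal.ofReal_pow hx0]
  congr 2
  rw [hxdef]
  have hM : ((M : ℝ) - 1) = ((M - 1 : ℕ) : ℝ) := by
    rw [Nat.cast_sub hM1, Nat.cast_one]
  rw [hM, cast_sub_one hN, ENNReal.ofReal_div_of_pos (by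
    rw [← cast_sub_one hN]; exact cast_pos hN)]
  rw [ENNReal.ofReal_natCast, ENNReal.ofReal_natCast, div_eq_mul_inv, cinv]

lemma theta_toReal (hN : 2 ≤ N) (hp0 : ∀ ℓ, 0 ≤ p ℓ) (hp1 : ∀ ℓ, p ℓ ≤ 1)
    (hpsum : ∑' ℓ, p ℓ = 1) (μ : ℝ → ℝ) (hμ : ∀ x, μ x = ∑' ℓ, p ℓ * x ^ ℓ)
    {M : ℕ} (hM1 : 1 ≤ M) (hMN : M ≤ N) :
    (θE N p M).toReal = μ (((M : ℝ) - 1) / ((N : ℝ) - 1)) := by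
  rw [← theta_eq p hN hp0 hp1 hpsum μ hμ hM1 hMN]
  refine ENNReal.toReal_ofReal ?_
  rw [hμ]
  refine tsum_nonneg fun n => mul_nonneg (hp0 n) (pow_nonneg ?_ n)
  have hM1R : (0:ℝ) ≤ (M : ℝ) - 1 := by
    have : (1:ℝ) ≤ (M:ℝ) := by exact_mod_cast hM1
    linarith
  exact div_nonneg hM1R (cast_pos hN).le

lemma qProb_eq (hN : 2 ≤ N) (hp0 : ∀ ℓ, 0 ≤ p ℓ) (hN0 : 0 < N) (k : ℕ) :
    qProb N hN0 p k
      = (∑' g : Fin N → List (Fin N), W N p g * I ((outComp N hN0 g).ncard = k)).toReal := by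
  rw [qProb, graphProb_eq p hN hp0]
  congr 1


end main

end FSB

theorem final_size_binomial_identity
    (N : ℕ) (hN : 2 ≤ N) (p : ℕ → ℝ)
    (hp0 : ∀ ℓ, 0 ≤ p ℓ) (hp1 : ∀ ℓ, p ℓ ≤ 1) (hpsum : ∑' ℓ, p ℓ = 1)
    (μ : ℝ → ℝ) (hμ : ∀ x, μ x = ∑' ℓ, p ℓ * x ^ ℓ)
    (M : ℕ) (hM1 : 1 ≤ M) (hMN : M ≤ N) :
    (μ (((M : ℝ) - 1) / ((N : ℝ) - 1))) ^ M =
      ∑ k ∈ Finset.Icc 1 M,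
        qProb N (by omega) p k *
          (μ (((M : ℝ) - 1) / ((N : ℝ) - 1))) ^ (M - k) *
          (((M - 1).choose (k - 1) : ℝ) / ((N - 1).choose (k - 1) : ℝ)) := by
  have hN0 : 0 < N := by omega
  have hθR := FSB.theta_toReal p hN hp0 hp1 hpsum μ hμ hM1 hMN
  have hθtop : FSB.θE N p M ≠ ⊤ := by
    rw [← FSB.theta_eq p hN hp0 hp1 hpsum μ hμ hM1 hMN]
    exact ENNReal.ofReal_ne_top
  have hPCtop : ∀ k, FSB.PC p hN0 (FSB.AF N k) ≠ ⊤ := fun k =>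
    ne_top_of_le_ne_top ENNReal.one_ne_top (FSB.PC_le_one p hN hp0 hpsum hN0 _)
  calc (μ (((M : ℝ) - 1) / ((N : ℝ) - 1))) ^ M
      = ((FSB.θE N p M) ^ M).toReal := by rw [ENNReal.toReal_pow, hθR]
    _ = (∑ k ∈ Finset.Icc 1 M, ((M - 1).choose (k - 1) : ℝ≥0∞)
          * (FSB.PC p hN0 (FSB.AF N k) * FSB.θE N p M ^ (M - k))).toReal := by
        rw [FSB.main_ENN p hN hp0 hpsum hN0 hM1 hMN]
    _ = ∑ k ∈ Finset.Icc 1 M, (((M - 1).choose (k - 1) : ℝ≥0∞)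
          * (FSB.PC p hN0 (FSB.AF N k) * FSB.θE N p M ^ (M - k))).toReal :=
        ENNReal.toReal_sum (fun k _ =>
          ENNReal.mul_ne_top (ENNReal.natCast_ne_top _)
            (ENNReal.mul_ne_top (hPCtop k) (ENNReal.pow_ne_top hθtop)))
    _ = ∑ k ∈ Finset.Icc 1 M,
        qProb N (by omega) p k *
          (μ (((M : ℝ) - 1) / ((N : ℝ) - 1))) ^ (M - k) *
          (((M - 1).choose (k - 1) : ℝ) / ((N - 1).choose (k - 1) : ℝ)) := by
        refine Finset.sum_congr rfl fun k hk => ?_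
        rw [Finset.mem_Icc] at hk
        have hq : qProb N hN0 p k
            = (((N - 1).choose (k - 1) : ℝ≥0∞) * FSB.PC p hN0 (FSB.AF N k)).toReal := by
          rw [FSB.qProb_eq p hN hp0 hN0 k,
            FSB.q_eq_choose p hN0 k hk.1 (le_trans hk.2 hMN)]
        have hq' : qProb N (Nat.lt_of_lt_of_le Nat.zero_lt_two hN : 0 < N) p k = qProb N hN0 p k := rfl
        rw [show (qProb N (by omega) p k : ℝ) = qProb N hN0 p k from rfl, hq]
        rw [ENNReal.toReal_mul, ENNReal.toReal_natCast,
          ENNReal.toReal_mul, ENNReal.toReal_mul, ENNReal.toReal_natCast,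
          ENNReal.toReal_pow, hθR]
        have hcN : (((N - 1).choose (k - 1) : ℕ) : ℝ) ≠ 0 := by
          have : 0 < (N - 1).choose (k - 1) := Nat.choose_pos (by omega)
          exact_mod_cast this.ne'
        field_simp
end

section
/- Consider the random directed multigraph model on N nodes with offspring PGF μ. For every M and k with 1 ≤ k ≤ M ≤ N, the probability of the event that (i) the out-component of node 0 has exactly k nodes, (ii) all of these k nodes lie in {0,1,...,M-1}, and (iii) no node of {0,1,...,M-1} outside the out-component of node 0 has any edge to a node in {M,...,N-1}, equals q_k · [μ((M-1)/(N-1))]^{M-k} · ( C(M-1,k-1) / C(N-1,k-1) ). -/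
open scoped Classical

open scoped ENNReal

lemma tsum_pi_prod_fin {β : Type*} : ∀ (n : ℕ) (f : Fin n → β → ℝ≥0∞),
    ∑' g : Fin n → β, ∏ i, f i (g i) = ∏ i, ∑' b, f i b := by
  intro n
  induction n with
  | zero =>
    intro f
    simp only [Finset.univ_eq_empty, Finset.prod_empty]
    exact tsum_eq_single (fun i => i.elim0) (fun b hb => absurd (Subsingleton.elim b _) hb)
  | succ n ih =>
    intro f
    rw [← (Fin.consEquiv (fun _ : Fin (n+1) => β)).tsum_eq, ENNReal.tsum_prod']
    simp only [Fin.consEquiv_apply]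
    calc ∑' (b : β) (h : Fin n → β), ∏ i, f i ((Fin.consEquiv fun _ : Fin (n+1) => β) (b, h) i)
        = ∑' (b : β) (h : Fin n → β), f 0 b * ∏ i, f i.succ (h i) := by
          refine tsum_congr fun b => tsum_congr fun h => ?_
          rw [Fin.prod_univ_succ]; simp
      _ = (∑' b, f 0 b) * ∏ i : Fin n, ∑' b, f i.succ b := by
          rw [← ih (fun i b => f i.succ b)]
          rw [← ENNReal.tsum_mul_right]
          exact tsum_congr fun b => ENNReal.tsum_mul_left
      _ = ∏ i, ∑' b, f i b := by rw [Fin.prod_univ_succ]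

lemma tsum_pi_prod {ι β : Type*} [Fintype ι] (f : ι → β → ℝ≥0∞) :
    ∑' g : ι → β, ∏ i, f i (g i) = ∏ i, ∑' b, f i b := by
  classical
  obtain ⟨n, ⟨e⟩⟩ : ∃ n, Nonempty (ι ≃ Fin n) := ⟨Fintype.card ι, ⟨Fintype.equivFin ι⟩⟩
  rw [← (Equiv.arrowCongr e (Equiv.refl β)).symm.tsum_eq]
  have h1 : ∀ h : Fin n → β, ∏ i, f i (((Equiv.arrowCongr e (Equiv.refl β)).symm h) i)
      = ∏ j : Fin n, f (e.symm j) (h j) := by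
    intro h
    rw [← e.symm.prod_comp]
    simp [Equiv.arrowCongr]
  rw [tsum_congr h1, tsum_pi_prod_fin n (fun j b => f (e.symm j) b), ← e.symm.prod_comp]

namespace OCP

noncomputable def wgt (N : ℕ) (p : ℕ → ℝ) (u : Fin N) (l : List (Fin N)) : ℝ≥0∞ :=
  if ∀ v ∈ l, v ≠ u then
    ENNReal.ofReal (p l.length) * (ENNReal.ofReal (1 / ((N : ℝ) - 1))) ^ l.length
  else 0

noncomputable def WG (N : ℕ) (p : ℕ → ℝ) (g : Fin N → List (Fin N)) : ℝ≥0∞ :=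
  ∏ u, wgt N p u (g u)

noncomputable def PE (N : ℕ) (p : ℕ → ℝ) (E : Set (Fin N → List (Fin N))) : ℝ≥0∞ :=
  ∑' g, Set.indicator E (WG N p) g

lemma wgt_ne_top (N : ℕ) (p : ℕ → ℝ) (u : Fin N) (l : List (Fin N)) : wgt N p u l ≠ ⊤ := by
  unfold wgt
  split
  · exact ENNReal.mul_ne_top ENNReal.ofReal_ne_top (ENNReal.pow_ne_top ENNReal.ofReal_ne_top)
  · exact ENNReal.zero_ne_top

lemma WG_ne_top (N : ℕ) (p : ℕ → ℝ) (g : Fin N → List (Fin N)) : WG N p g ≠ ⊤ := by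
  refine (ENNReal.prod_lt_top ?_).ne
  exact fun u _ => (wgt_ne_top N p u (g u)).lt_top

lemma summable_p {p : ℕ → ℝ} (hp0 : ∀ ℓ, 0 ≤ p ℓ) (hpsum : ∑' ℓ, p ℓ = 1) : Summable p := by
  by_contra h
  rw [tsum_eq_zero_of_not_summable h] at hpsum
  norm_num at hpsum

lemma ofReal_graphWeight {N : ℕ} (hN : 2 ≤ N) {p : ℕ → ℝ} (hp0 : ∀ ℓ, 0 ≤ p ℓ)
    (g : Fin N → List (Fin N)) : ENNReal.ofReal (graphWeight N p g) = WG N p g := by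
  have hinv : (0:ℝ) ≤ 1 / ((N : ℝ) - 1) := by
    apply div_nonneg zero_le_one
    have : (2:ℝ) ≤ (N:ℝ) := by exact_mod_cast hN
    linarith
  rw [graphWeight, ENNReal.ofReal_prod_of_nonneg]
  · refine Finset.prod_congr rfl fun u _ => ?_
    unfold wgt
    split
    · rw [ENNReal.ofReal_mul (hp0 _), ENNReal.ofReal_pow hinv]
    · exact ENNReal.ofReal_zero
  · intro u _
    split
    · exact mul_nonneg (hp0 _) (pow_nonneg hinv _)
    · exact le_refl 0


lemma tsum_list_count {β : Type*} [Fintype β] (T : Finset β) (q : ℕ → ℝ≥0∞) (c : ℝ≥0∞) :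
    ∑' l : List β, (if ∀ v ∈ l, v ∈ T then q l.length * c ^ l.length else 0)
      = ∑' n : ℕ, q n * ((T.card : ℝ≥0∞) * c) ^ n := by
  rw [← List.equivSigmaTuple.symm.tsum_eq, ENNReal.tsum_sigma']
  refine tsum_congr fun n => ?_
  have hsym : ∀ fn : Fin n → β, (List.equivSigmaTuple.symm ⟨n, fn⟩ : List β) = List.ofFn fn :=
    fun fn => rfl
  calc ∑' fn : Fin n → β,
        (if ∀ v ∈ (List.equivSigmaTuple.symm ⟨n, fn⟩ : List β), v ∈ T then
          q (List.equivSigmaTuple.symm ⟨n, fn⟩ : List β).length *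
            c ^ (List.equivSigmaTuple.symm ⟨n, fn⟩ : List β).length else 0)
      = ∑' fn : Fin n → β, (q n * c ^ n) * ∏ i, (if fn i ∈ T then (1:ℝ≥0∞) else 0) := by
        refine tsum_congr fun fn => ?_
        rw [hsym fn]
        by_cases h : ∀ i, fn i ∈ T
        · rw [if_pos, Finset.prod_eq_one fun i _ => if_pos (h i), mul_one, List.length_ofFn]
          rw [List.forall_mem_ofFn_iff]; exact h
        · obtain ⟨i, hi⟩ := not_forall.1 h
          have hz : (∏ i : Fin n, if fn i ∈ T then (1:ℝ≥0∞) else 0) = 0 :=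
            Finset.prod_eq_zero (Finset.mem_univ i) (if_neg hi)
          rw [if_neg (by rw [List.forall_mem_ofFn_iff]; exact h), hz, mul_zero]
    _ = (q n * c ^ n) * ∑' fn : Fin n → β, ∏ i, (if fn i ∈ T then (1:ℝ≥0∞) else 0) :=
        ENNReal.tsum_mul_left
    _ = (q n * c ^ n) * ∏ _i : Fin n, ∑' v : β, (if v ∈ T then (1:ℝ≥0∞) else 0) := by
        rw [tsum_pi_prod (fun _ v => (if v ∈ T then (1:ℝ≥0∞) else 0))]
    _ = q n * ((T.card : ℝ≥0∞) * c) ^ n := by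
        have hv : ∑' v : β, (if v ∈ T then (1:ℝ≥0∞) else 0) = (T.card : ℝ≥0∞) := by
          rw [tsum_fintype]
          simp [Finset.sum_ite_mem, Finset.univ_inter]
        rw [hv, Finset.prod_const, Finset.card_univ, Fintype.card_fin, mul_pow]
        ring

lemma card_cast_eq {N : ℕ} (hN : 1 ≤ N) :
    ((N - 1 : ℕ) : ℝ≥0∞) = ENNReal.ofReal ((N : ℝ) - 1) := by
  rw [← ENNReal.ofReal_natCast]
  congr 1
  push_cast [Nat.cast_sub hN]
  ring

lemma wgt_total {N : ℕ} (hN : 2 ≤ N) {p : ℕ → ℝ} (hp0 : ∀ ℓ, 0 ≤ p ℓ)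
    (hpsum : ∑' ℓ, p ℓ = 1) (u : Fin N) : ∑' l : List (Fin N), wgt N p u l = 1 := by
  have hNR : (0:ℝ) < (N:ℝ) - 1 := by
    have : (2:ℝ) ≤ (N:ℝ) := by exact_mod_cast hN
    linarith
  have h2 := tsum_list_count (Finset.univ.erase u) (fun n => ENNReal.ofReal (p n))
    (ENNReal.ofReal (1 / ((N : ℝ) - 1)))
  rw [show (∑' l : List (Fin N), wgt N p u l)
      = ∑' n : ℕ, ENNReal.ofReal (p n)
          * (((Finset.univ.erase u).card : ℝ≥0∞) * ENNReal.ofReal (1 / ((N : ℝ) - 1))) ^ n from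
    Eq.trans (tsum_congr fun l => ?_) h2]
  have hcard : (Finset.univ.erase u).card = N - 1 := by
    rw [Finset.card_erase_of_mem (Finset.mem_univ u), Finset.card_univ, Fintype.card_fin]
  have hone : ((Finset.univ.erase u).card : ℝ≥0∞) * ENNReal.ofReal (1 / ((N : ℝ) - 1)) = 1 := by
    rw [hcard, card_cast_eq (by omega), ← ENNReal.ofReal_mul hNR.le]
    rw [mul_one_div, div_self hNR.ne', ENNReal.ofReal_one]
  rw [hone]
  simp only [one_pow, mul_one]
  rw [← ENNReal.ofReal_tsum_of_nonneg hp0 (summable_p hp0 hpsum), hpsum, ENNReal.ofReal_one]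
  unfold wgt
  by_cases hc : ∀ v ∈ l, v ∈ Finset.univ.erase u
  · have hc' : ∀ v ∈ l, v ≠ u := fun v hv => by simpa using (Finset.mem_erase.1 (hc v hv)).1
    rw [if_pos hc, if_pos hc']
  · have hc' : ¬ ∀ v ∈ l, v ≠ u := by
      intro hall
      exact hc fun v hv => Finset.mem_erase.2 ⟨hall v hv, Finset.mem_univ v⟩
    rw [if_neg hc, if_neg hc']

lemma card_allM {N M : ℕ} (hMN : M ≤ N) :
    (Finset.univ.filter fun v : Fin N => (v : ℕ) < M).card = M := by
  have h : ∀ m ∈ Finset.range M, m < N := fun m hm => lt_of_lt_of_le (Finset.mem_range.1 hm) hMN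
  rw [show (Finset.univ.filter fun v : Fin N => (v : ℕ) < M) = (Finset.range M).attachFin h from ?_]
  · rw [Finset.card_attachFin, Finset.card_range]
  · ext a
    simp [Finset.mem_attachFin, Finset.mem_range]

lemma wgt_constrained {N : ℕ} (hN : 2 ≤ N) {p : ℕ → ℝ} (hp0 : ∀ ℓ, 0 ≤ p ℓ)
    (hpsum : ∑' ℓ, p ℓ = 1) {M : ℕ} (hM1 : 1 ≤ M) (hMN : M ≤ N)
    (μ : ℝ → ℝ) (hμ : ∀ x, μ x = ∑' ℓ, p ℓ * x ^ ℓ)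
    (u : Fin N) (hu : (u : ℕ) < M) :
    ∑' l : List (Fin N), (if ∀ v ∈ l, (v : ℕ) < M then wgt N p u l else 0)
      = ENNReal.ofReal (μ (((M : ℝ) - 1) / ((N : ℝ) - 1))) := by
  set x : ℝ := ((M : ℝ) - 1) / ((N : ℝ) - 1) with hx
  have hNR : (0:ℝ) < (N:ℝ) - 1 := by
    have : (2:ℝ) ≤ (N:ℝ) := by exact_mod_cast hN
    linarith
  have hMR : (0:ℝ) ≤ (M:ℝ) - 1 := by
    have : (1:ℝ) ≤ (M:ℝ) := by exact_mod_cast hM1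
    linarith
  have hx0 : 0 ≤ x := div_nonneg hMR hNR.le
  have hx1 : x ≤ 1 := by
    rw [hx, div_le_one hNR]
    have : (M:ℝ) ≤ (N:ℝ) := by exact_mod_cast hMN
    linarith
  set T : Finset (Fin N) := (Finset.univ.filter fun v : Fin N => (v : ℕ) < M).erase u with hT
  have h2 := tsum_list_count T (fun n => ENNReal.ofReal (p n))
    (ENNReal.ofReal (1 / ((N : ℝ) - 1)))
  rw [show (∑' l : List (Fin N), (if ∀ v ∈ l, (v : ℕ) < M then wgt N p u l else 0))
      = ∑' n : ℕ, ENNReal.ofReal (p n)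
          * ((T.card : ℝ≥0∞) * ENNReal.ofReal (1 / ((N : ℝ) - 1))) ^ n from
    Eq.trans (tsum_congr fun l => ?_) h2]
  · have hcard : T.card = M - 1 := by
      rw [hT, Finset.card_erase_of_mem (by simp [hu]), card_allM hMN]
    have hc1 : (T.card : ℝ≥0∞) * ENNReal.ofReal (1 / ((N : ℝ) - 1)) = ENNReal.ofReal x := by
      rw [hcard, show ((M - 1 : ℕ) : ℝ≥0∞) = ENNReal.ofReal ((M : ℝ) - 1) from ?_,
        ← ENNReal.ofReal_mul hMR, mul_one_div]
      rw [← ENNReal.ofReal_natCast]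
      congr 1
      push_cast [Nat.cast_sub hM1]
      ring
    rw [hc1]
    have hsum : Summable fun n => p n * x ^ n := by
      refine Summable.of_nonneg_of_le (fun n => mul_nonneg (hp0 n) (pow_nonneg hx0 n))
        (fun n => ?_) (summable_p hp0 hpsum)
      calc p n * x ^ n ≤ p n * 1 := by
            exact mul_le_mul_of_nonneg_left (pow_le_one₀ hx0 hx1) (hp0 n)
        _ = p n := mul_one _
    rw [hμ x, ENNReal.ofReal_tsum_of_nonneg
      (fun n => mul_nonneg (hp0 n) (pow_nonneg hx0 n)) hsum]
    refine tsum_congr fun n => ?_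
    rw [ENNReal.ofReal_mul (hp0 n), ENNReal.ofReal_pow hx0]
  · unfold wgt
    by_cases hc : ∀ v ∈ l, v ∈ T
    · have hcM : ∀ v ∈ l, (v : ℕ) < M := by
        intro v hv
        have := hc v hv
        rw [hT, Finset.mem_erase, Finset.mem_filter] at this
        exact this.2.2
      have hcu : ∀ v ∈ l, v ≠ u := by
        intro v hv
        have := hc v hv
        rw [hT, Finset.mem_erase] at this
        exact this.1
      rw [if_pos hc, if_pos hcM, if_pos hcu]
    · rw [if_neg hc]
      by_cases hcM : ∀ v ∈ l, (v : ℕ) < M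
      · rw [if_pos hcM]
        have hcu : ¬ ∀ v ∈ l, v ≠ u := by
          intro hall
          exact hc fun v hv => by
            rw [hT, Finset.mem_erase, Finset.mem_filter]
            exact ⟨hall v hv, Finset.mem_univ v, hcM v hv⟩
        rw [if_neg hcu]
      · rw [if_neg hcM]

lemma graphWeight_nonneg {N : ℕ} (hN : 2 ≤ N) {p : ℕ → ℝ} (hp0 : ∀ ℓ, 0 ≤ p ℓ)
    (g : Fin N → List (Fin N)) : 0 ≤ graphWeight N p g := by
  have hinv : (0:ℝ) ≤ 1 / ((N : ℝ) - 1) := by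
    apply div_nonneg zero_le_one
    have : (2:ℝ) ≤ (N:ℝ) := by exact_mod_cast hN
    linarith
  refine Finset.prod_nonneg fun u _ => ?_
  split
  · exact mul_nonneg (hp0 _) (pow_nonneg hinv _)
  · exact le_refl 0

lemma graphProb_eq {N : ℕ} (hN : 2 ≤ N) {p : ℕ → ℝ} (hp0 : ∀ ℓ, 0 ≤ p ℓ)
    (E : Set (Fin N → List (Fin N))) : graphProb N p E = (PE N p E).toReal := by
  have h1 : ∀ g, Set.indicator E (graphWeight N p) g = (Set.indicator E (WG N p) g).toReal := by
    intro g
    by_cases hg : g ∈ E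
    · rw [Set.indicator_of_mem hg, Set.indicator_of_mem hg, ← ofReal_graphWeight hN hp0,
        ENNReal.toReal_ofReal (graphWeight_nonneg hN hp0 g)]
    · rw [Set.indicator_of_notMem hg, Set.indicator_of_notMem hg, ENNReal.toReal_zero]
  rw [graphProb, tsum_congr h1, PE, ← ENNReal.tsum_toReal_eq]
  intro g
  by_cases hg : g ∈ E
  · rw [Set.indicator_of_mem hg]; exact WG_ne_top N p g
  · rw [Set.indicator_of_notMem hg]; exact ENNReal.zero_ne_top

lemma PE_univ {N : ℕ} (hN : 2 ≤ N) {p : ℕ → ℝ} (hp0 : ∀ ℓ, 0 ≤ p ℓ)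
    (hpsum : ∑' ℓ, p ℓ = 1) : PE N p Set.univ = 1 := by
  rw [PE]
  simp only [Set.indicator_univ]
  rw [show (∑' g : Fin N → List (Fin N), WG N p g)
      = ∏ u : Fin N, ∑' l : List (Fin N), wgt N p u l from tsum_pi_prod (wgt N p)]
  rw [Finset.prod_congr rfl fun u _ => wgt_total hN hp0 hpsum u, Finset.prod_const_one]

lemma PE_mono {N : ℕ} {p : ℕ → ℝ} {E F : Set (Fin N → List (Fin N))} (h : E ⊆ F) :
    PE N p E ≤ PE N p F :=
  Summable.tsum_le_tsum (fun g => Set.indicator_le_indicator_of_subset h (fun g => zero_le) g)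
    ENNReal.summable ENNReal.summable

lemma PE_ne_top {N : ℕ} (hN : 2 ≤ N) {p : ℕ → ℝ} (hp0 : ∀ ℓ, 0 ≤ p ℓ)
    (hpsum : ∑' ℓ, p ℓ = 1) (E : Set (Fin N → List (Fin N))) : PE N p E ≠ ⊤ := by
  refine ne_top_of_le_ne_top ?_ (PE_mono (Set.subset_univ E))
  rw [PE_univ hN hp0 hpsum]
  exact ENNReal.one_ne_top

noncomputable def extS {N : ℕ} (S : Finset (Fin N))
    (h : {x : Fin N // x ∈ S} → List (Fin N)) : Fin N → List (Fin N) :=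
  fun u => if hu : u ∈ S then h ⟨u, hu⟩ else []

lemma split_core {N : ℕ} (p : ℕ → ℝ) (S : Finset (Fin N)) (A : Set (Fin N → List (Fin N)))
    (hA : ∀ g g', (∀ u ∈ S, g u = g' u) → (g ∈ A ↔ g' ∈ A))
    (B : Fin N → Set (List (Fin N))) :
    PE N p {g | g ∈ A ∧ ∀ u, u ∉ S → g u ∈ B u}
      = (∑' h : {x : Fin N // x ∈ S} → List (Fin N),
          (Set.indicator A (fun _ => (1:ℝ≥0∞)) (extS S h))
            * ∏ u : {x : Fin N // x ∈ S}, wgt N p u (h u))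
        * ∏ u : {x : Fin N // ¬ x ∈ S}, ∑' l : List (Fin N), Set.indicator (B u) (wgt N p u) l := by
  classical
  set e := Equiv.piEquivPiSubtypeProd (fun x : Fin N => x ∈ S) (fun _ => List (Fin N)) with he
  set F : ({x : Fin N // x ∈ S} → List (Fin N)) → ℝ≥0∞ := fun h =>
    (Set.indicator A (fun _ => (1:ℝ≥0∞)) (extS S h))
      * ∏ u : {x : Fin N // x ∈ S}, wgt N p u (h u) with hF
  set G : ({x : Fin N // ¬ x ∈ S} → List (Fin N)) → ℝ≥0∞ := fun h2 =>
    ∏ u : {x : Fin N // ¬ x ∈ S}, Set.indicator (B u) (wgt N p u) (h2 u) with hG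
  have key : ∀ x : ({x : Fin N // x ∈ S} → List (Fin N)) × ({x : Fin N // ¬ x ∈ S} → List (Fin N)),
      Set.indicator {g | g ∈ A ∧ ∀ u, u ∉ S → g u ∈ B u} (WG N p) (e.symm x) = F x.1 * G x.2 := by
    rintro ⟨h1, h2⟩
    set g : Fin N → List (Fin N) := e.symm (h1, h2) with hg
    have gS : ∀ u : {x : Fin N // x ∈ S}, g u = h1 u := by
      rintro ⟨u, hu⟩
      rw [hg, he, Equiv.piEquivPiSubtypeProd_symm_apply, dif_pos hu]
    have gSc : ∀ u : {x : Fin N // ¬ x ∈ S}, g u = h2 u := by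
      rintro ⟨u, hu⟩
      rw [hg, he, Equiv.piEquivPiSubtypeProd_symm_apply, dif_neg hu]
    have hAg : g ∈ A ↔ extS S h1 ∈ A := by
      refine hA _ _ fun u hu => ?_
      rw [show g u = h1 ⟨u, hu⟩ from gS ⟨u, hu⟩, extS, dif_pos hu]
    by_cases hgA : g ∈ A
    · by_cases hgB : ∀ u, u ∉ S → g u ∈ B u
      · rw [Set.indicator_of_mem (show g ∈ {g | g ∈ A ∧ ∀ u, u ∉ S → g u ∈ B u} from ⟨hgA, hgB⟩)]
        rw [hF, hG]
        simp only
        rw [Set.indicator_of_mem (hAg.1 hgA), one_mul]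
        rw [show WG N p g = (∏ u : {x : Fin N // x ∈ S}, wgt N p u (g u))
            * ∏ u : {x : Fin N // ¬ x ∈ S}, wgt N p u (g u) from ?_]
        rotate_left
        · rw [show (∏ u : {x : Fin N // x ∈ S}, wgt N p u (g u))
              = ∏ u ∈ S, wgt N p u (g u) from
            (Finset.prod_subtype S (fun x => Iff.rfl) fun u => wgt N p u (g u)).symm]
          rw [show (∏ u : {x : Fin N // ¬ x ∈ S}, wgt N p u (g u))
              = ∏ u ∈ Sᶜ, wgt N p u (g u) from
            (Finset.prod_subtype Sᶜ (fun x => Finset.mem_compl) fun u => wgt N p u (g u)).symm]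
          rw [Finset.prod_mul_prod_compl S (fun u => wgt N p u (g u))]
          rfl
        congr 1
        · exact Finset.prod_congr rfl fun u _ => by rw [gS u]
        · refine Finset.prod_congr rfl fun u _ => ?_
          rw [← gSc u, Set.indicator_of_mem (hgB u u.2)]
      · rw [Set.indicator_of_notMem (fun hmem => hgB hmem.2)]
        push_neg at hgB
        obtain ⟨u, hu, hBu⟩ := hgB
        have : G h2 = 0 := by
          rw [hG]
          refine Finset.prod_eq_zero (Finset.mem_univ (⟨u, hu⟩ : {x : Fin N // ¬ x ∈ S})) ?_
          rw [← gSc ⟨u, hu⟩]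
          exact Set.indicator_of_notMem hBu _
        rw [this, mul_zero]
    · rw [Set.indicator_of_notMem (fun hmem => hgA hmem.1)]
      have : F h1 = 0 := by
        rw [hF]
        simp only
        rw [Set.indicator_of_notMem (fun hx => hgA (hAg.2 hx)), zero_mul]
      rw [this, zero_mul]
  rw [PE, ← e.symm.tsum_eq, tsum_congr key, ENNReal.tsum_prod']
  have hstep : ∀ a, (∑' b, F (a, b).1 * G (a, b).2) = F a * ∑' b, G b := fun a => by
    have hb : ∀ b, F (a, b).1 * G (a, b).2 = F a * G b := fun b => rfl
    rw [tsum_congr hb]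
    exact ENNReal.tsum_mul_left
  rw [tsum_congr hstep, ENNReal.tsum_mul_right]
  congr 1
  exact tsum_pi_prod (ι := {x : Fin N // ¬ x ∈ S}) (β := List (Fin N)) fun u l => Set.indicator (B ↑u) (wgt N p ↑u) l

lemma rtg_conj {α β : Type*} (e : α ≃ β) (R : β → β → Prop) (x y : α) :
    Relation.ReflTransGen (fun a b => R (e a) (e b)) x y ↔ Relation.ReflTransGen R (e x) (e y) := by
  constructor
  · intro h
    induction h with
    | refl => exact Relation.ReflTransGen.refl
    | tail _ hbc ih => exact ih.tail hbc
  · intro h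
    have key : ∀ z, Relation.ReflTransGen R (e x) z →
        Relation.ReflTransGen (fun a b => R (e a) (e b)) x (e.symm z) := by
      intro z hz
      induction hz with
      | refl => simpa using Relation.ReflTransGen.refl (a := x)
      | tail _ hbc ih => exact ih.tail (by simpa using hbc)
    simpa using key (e y) h

lemma outComp_agree {N : ℕ} (hN : 0 < N) (S : Set (Fin N)) (g g' : Fin N → List (Fin N))
    (hag : ∀ u : Fin N, u ∈ S → g u = g' u) (h : outComp N hN g = S) : outComp N hN g' = S := by
  have h2 : ∀ v, v ∈ outComp N hN g → v ∈ outComp N hN g' := by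
    intro v hv
    induction hv with
    | refl => exact Relation.ReflTransGen.refl
    | @tail b c hab hbc ih =>
      refine ih.tail ?_
      rw [← hag b (h ▸ hab)]
      exact hbc
  have h1 : ∀ v, v ∈ outComp N hN g' → v ∈ outComp N hN g := by
    intro v hv
    induction hv with
    | refl => exact Relation.ReflTransGen.refl
    | @tail b c hab hbc ih =>
      refine ih.tail ?_
      rw [hag b (h ▸ ih)]
      exact hbc
  rw [← h]
  exact Set.Subset.antisymm (fun v hv => h1 v hv) (fun v hv => h2 v hv)

lemma PE_outComp_symm {N : ℕ} (hN : 0 < N) (p : ℕ → ℝ) (S T : Finset (Fin N))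
    (hS : (⟨0, hN⟩ : Fin N) ∈ S) (hT : (⟨0, hN⟩ : Fin N) ∈ T) (hcard : S.card = T.card) :
    PE N p {g | outComp N hN g = ↑S} = PE N p {g | outComp N hN g = ↑T} := by
  classical
  have hcardc : Sᶜ.card = Tᶜ.card := by simp [Finset.card_compl, hcard]
  let e1 : {x : Fin N // x ∈ S} ≃ {x : Fin N // x ∈ T} := Finset.equivOfCardEq hcard
  let z : {x : Fin N // x ∈ S} := ⟨⟨0, hN⟩, hS⟩
  let z' : {x : Fin N // x ∈ T} := ⟨⟨0, hN⟩, hT⟩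
  let e1' : {x : Fin N // x ∈ S} ≃ {x : Fin N // x ∈ T} := e1.trans (Equiv.swap (e1 z) z')
  have he1z : e1' z = z' := by
    simp only [e1', Equiv.trans_apply]
    exact Equiv.swap_apply_left _ _
  let e2 : {x : Fin N // ¬ x ∈ S} ≃ {x : Fin N // ¬ x ∈ T} :=
    (Equiv.subtypeEquivRight (fun x => (Finset.mem_compl (s := S)).symm)).trans
      ((Finset.equivOfCardEq hcardc).trans
        (Equiv.subtypeEquivRight (fun x => Finset.mem_compl (s := T))))
  let σ : Equiv.Perm (Fin N) :=
    (Equiv.sumCompl (fun x : Fin N => x ∈ S)).symm.trans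
      ((e1'.sumCongr e2).trans (Equiv.sumCompl (fun x : Fin N => x ∈ T)))
  have hσpos : ∀ (u : Fin N) (h : u ∈ S), σ u = (e1' ⟨u, h⟩ : Fin N) := by
    intro u h
    simp only [σ, Equiv.trans_apply, Equiv.sumCompl_symm_apply_of_pos h,
      Equiv.sumCongr_apply, Sum.map_inl, Equiv.sumCompl_apply_inl]
  have hσneg : ∀ (u : Fin N) (h : ¬ u ∈ S), σ u = (e2 ⟨u, h⟩ : Fin N) := by
    intro u h
    simp only [σ, Equiv.trans_apply, Equiv.sumCompl_symm_apply_of_neg h,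
      Equiv.sumCongr_apply, Sum.map_inr, Equiv.sumCompl_apply_inr]
  have hσS : ∀ u : Fin N, u ∈ S ↔ σ u ∈ T := by
    intro u
    constructor
    · intro h
      rw [hσpos u h]
      exact (e1' ⟨u, h⟩).2
    · intro h
      by_contra hu
      rw [hσneg u hu] at h
      exact (e2 ⟨u, hu⟩).2 h
  have hσ0 : σ ⟨0, hN⟩ = ⟨0, hN⟩ := by
    rw [hσpos _ hS]
    rw [show (⟨⟨0, hN⟩, hS⟩ : {x : Fin N // x ∈ S}) = z from rfl, he1z]
  let Ψ : (Fin N → List (Fin N)) ≃ (Fin N → List (Fin N)) :=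
    { toFun := fun g u => (g (σ u)).map σ.symm
      invFun := fun g u => (g (σ.symm u)).map σ
      left_inv := fun g => funext fun u => by
        simp [List.map_map, Equiv.self_comp_symm]
      right_inv := fun g => funext fun u => by
        simp [List.map_map, Equiv.symm_comp_self] }
  have hWG : ∀ g, WG N p (Ψ g) = WG N p g := by
    intro g
    have hfac : ∀ u : Fin N, wgt N p u ((g (σ u)).map σ.symm) = wgt N p (σ u) (g (σ u)) := by
      intro u
      unfold wgt
      rw [List.length_map]
      refine if_congr ?_ rfl rfl
      simp only [List.mem_map]
      constructor
      · rintro h v hv heq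
        refine h (σ.symm v) ⟨v, hv, rfl⟩ ?_
        rw [heq, Equiv.symm_apply_apply]
      · rintro h w ⟨v, hv, rfl⟩ heq
        refine h v hv ?_
        rw [← heq]
        simp
    calc WG N p (Ψ g) = ∏ u : Fin N, wgt N p (σ u) (g (σ u)) :=
          Finset.prod_congr rfl fun u _ => hfac u
      _ = WG N p g := Equiv.prod_comp σ (fun w => wgt N p w (g w))
  have hreach : ∀ g (v : Fin N), v ∈ outComp N hN (Ψ g) ↔ σ v ∈ outComp N hN g := by
    intro g v
    have hrel : (fun a b : Fin N => b ∈ Ψ g a) = (fun a b : Fin N => σ b ∈ g (σ a)) := by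
      funext a b
      refine propext ?_
      show b ∈ (g (σ a)).map σ.symm ↔ σ b ∈ g (σ a)
      simp only [List.mem_map]
      constructor
      · rintro ⟨c, hc, rfl⟩
        simpa using hc
      · intro hc
        exact ⟨σ b, hc, by simp⟩
    show Relation.ReflTransGen (fun a b : Fin N => b ∈ Ψ g a) ⟨0, hN⟩ v ↔ _
    rw [hrel]
    have := rtg_conj σ (fun a b : Fin N => b ∈ g a) ⟨0, hN⟩ v
    rw [this, hσ0]
    rfl
  have hout : ∀ g, (outComp N hN (Ψ g) = ↑S ↔ outComp N hN g = ↑T) := by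
    intro g
    rw [Set.ext_iff, Set.ext_iff]
    constructor
    · intro H w
      have h1 := hreach g (σ.symm w)
      rw [Equiv.apply_symm_apply] at h1
      have h2 := H (σ.symm w)
      rw [h1] at h2
      have h3 := hσS (σ.symm w)
      rw [Equiv.apply_symm_apply] at h3
      rw [h2]
      constructor
      · intro hw
        exact Finset.mem_coe.2 (h3.1 (Finset.mem_coe.1 hw))
      · intro hw
        exact Finset.mem_coe.2 (h3.2 (Finset.mem_coe.1 hw))
    · intro H v
      rw [hreach g v, H (σ v)]
      constructor
      · intro hv
        exact Finset.mem_coe.2 ((hσS v).2 (Finset.mem_coe.1 hv))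
      · intro hv
        exact Finset.mem_coe.2 ((hσS v).1 (Finset.mem_coe.1 hv))
  rw [PE, PE, ← Ψ.tsum_eq]
  refine tsum_congr fun g => ?_
  by_cases hg : outComp N hN g = ↑T
  · rw [Set.indicator_of_mem (show Ψ g ∈ {g | outComp N hN g = ↑S} from (hout g).2 hg),
      Set.indicator_of_mem (show g ∈ {g | outComp N hN g = ↑T} from hg), hWG]
  · rw [Set.indicator_of_notMem (show Ψ g ∉ {g | outComp N hN g = ↑S} from
      fun hmem => hg ((hout g).1 hmem)),
      Set.indicator_of_notMem (show g ∉ {g | outComp N hN g = ↑T} from hg)]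

lemma count_subsets {α : Type*} [DecidableEq α] [Fintype α] (a : α) (t : Finset α) (ha : a ∈ t)
    (k : ℕ) (hk : 1 ≤ k) :
    (Finset.univ.filter fun S : Finset α => a ∈ S ∧ S.card = k ∧ S ⊆ t).card
      = (t.card - 1).choose (k - 1) := by
  rw [show t.card - 1 = (t.erase a).card from (Finset.card_erase_of_mem ha).symm,
    ← Finset.card_powersetCard]
  refine Finset.card_bij' (fun S _ => S.erase a) (fun A _ => insert a A) ?_ ?_ ?_ ?_
  · intro S hS
    rw [Finset.mem_filter] at hS
    obtain ⟨-, haS, hcard, hsub⟩ := hS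
    rw [Finset.mem_powersetCard]
    exact ⟨fun x hx => Finset.mem_erase.2 ⟨(Finset.mem_erase.1 hx).1,
      hsub (Finset.mem_erase.1 hx).2⟩, by rw [Finset.card_erase_of_mem haS, hcard]⟩
  · intro A hA
    rw [Finset.mem_powersetCard] at hA
    obtain ⟨hsub, hcard⟩ := hA
    have haA : a ∉ A := fun h => (Finset.mem_erase.1 (hsub h)).1 rfl
    rw [Finset.mem_filter]
    refine ⟨Finset.mem_univ _, Finset.mem_insert_self _ _, ?_, ?_⟩
    · rw [Finset.card_insert_of_notMem haA, hcard]
      omega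
    · refine Finset.insert_subset ha fun x hx => (Finset.erase_subset a t) (hsub hx)
  · intro S hS
    rw [Finset.mem_filter] at hS
    exact Finset.insert_erase hS.2.1
  · intro A hA
    rw [Finset.mem_powersetCard] at hA
    have haA : a ∉ A := fun h => (Finset.mem_erase.1 (hA.1 h)).1 rfl
    exact Finset.erase_insert haA

/-- Per-node constraint sets. -/
def BM (N M : ℕ) (u : Fin N) : Set (List (Fin N)) :=
  if (u : ℕ) < M then {l | ∀ v ∈ l, (v : ℕ) < M} else Set.univ

lemma decomp_q {N : ℕ} (hN : 0 < N) (p : ℕ → ℝ) (k : ℕ) :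
    PE N p {g | (outComp N hN g).ncard = k}
      = ∑ S ∈ Finset.univ.filter
          (fun S : Finset (Fin N) => (⟨0, hN⟩ : Fin N) ∈ S ∧ S.card = k),
          PE N p {g | outComp N hN g = ↑S} := by
  classical
  simp only [PE]
  rw [← Summable.tsum_finsetSum (fun S _ => ENNReal.summable)]
  refine tsum_congr fun g => ?_
  by_cases hk : (outComp N hN g).ncard = k
  · have hfin : (outComp N hN g).Finite := Set.toFinite _
    set S₀ := hfin.toFinset with hS₀
    have hcoe : (↑S₀ : Set (Fin N)) = outComp N hN g := hfin.coe_toFinset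
    have hmem : S₀ ∈ Finset.univ.filter
        (fun S : Finset (Fin N) => (⟨0, hN⟩ : Fin N) ∈ S ∧ S.card = k) := by
      rw [Finset.mem_filter]
      refine ⟨Finset.mem_univ _, ?_, ?_⟩
      · rw [hS₀, Set.Finite.mem_toFinset]
        exact Relation.ReflTransGen.refl
      · rw [← hk, Set.ncard_eq_toFinset_card _ hfin]
    rw [Set.indicator_of_mem (show g ∈ {g | (outComp N hN g).ncard = k} from hk)]
    rw [Finset.sum_eq_single_of_mem S₀ hmem ?_]
    · rw [Set.indicator_of_mem (show g ∈ {g | outComp N hN g = ↑S₀} from hcoe.symm)]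
    · intro S hS hne
      refine Set.indicator_of_notMem (show g ∉ {g | outComp N hN g = ↑S} from fun hmm => ?_) _
      refine hne (Finset.coe_injective ?_)
      rw [hcoe, hmm]
  · rw [Set.indicator_of_notMem (show g ∉ {g | (outComp N hN g).ncard = k} from hk)]
    symm
    refine Finset.sum_eq_zero fun S hS => ?_
    refine Set.indicator_of_notMem (show g ∉ {g | outComp N hN g = ↑S} from fun hmm => ?_) _
    rw [Finset.mem_filter] at hS
    exact hk (by rw [Set.mem_setOf_eq] at hmm; rw [hmm, Set.ncard_coe_finset, hS.2.2])

lemma decomp_L {N : ℕ} (hN : 0 < N) (p : ℕ → ℝ) (k M : ℕ) :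
    PE N p {g | (outComp N hN g).ncard = k ∧ (outComp N hN g) ⊆ {v : Fin N | (v : ℕ) < M} ∧
        ∀ u : Fin N, (u : ℕ) < M → u ∉ outComp N hN g → ∀ v ∈ g u, (v : ℕ) < M}
      = ∑ S ∈ Finset.univ.filter
          (fun S : Finset (Fin N) =>
            (⟨0, hN⟩ : Fin N) ∈ S ∧ S.card = k ∧ ∀ v ∈ S, (v : ℕ) < M),
          PE N p {g | outComp N hN g = ↑S ∧ ∀ u, u ∉ S → g u ∈ BM N M u} := by
  classical
  simp only [PE]
  rw [← Summable.tsum_finsetSum (fun S _ => ENNReal.summable)]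
  refine tsum_congr fun g => ?_
  set E : Set (Fin N → List (Fin N)) :=
    {g | (outComp N hN g).ncard = k ∧ (outComp N hN g) ⊆ {v : Fin N | (v : ℕ) < M} ∧
      ∀ u : Fin N, (u : ℕ) < M → u ∉ outComp N hN g → ∀ v ∈ g u, (v : ℕ) < M} with hE
  by_cases hg : g ∈ E
  · obtain ⟨hk, hsub, hedge⟩ := hg
    have hfin : (outComp N hN g).Finite := Set.toFinite _
    set S₀ := hfin.toFinset with hS₀
    have hcoe : (↑S₀ : Set (Fin N)) = outComp N hN g := hfin.coe_toFinset
    have hmem : S₀ ∈ Finset.univ.filter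
        (fun S : Finset (Fin N) =>
          (⟨0, hN⟩ : Fin N) ∈ S ∧ S.card = k ∧ ∀ v ∈ S, (v : ℕ) < M) := by
      rw [Finset.mem_filter]
      refine ⟨Finset.mem_univ _, ?_, ?_, ?_⟩
      · rw [hS₀, Set.Finite.mem_toFinset]
        exact Relation.ReflTransGen.refl
      · rw [← hk, Set.ncard_eq_toFinset_card _ hfin]
      · intro v hv
        exact hsub (by rwa [hS₀, Set.Finite.mem_toFinset] at hv)
    rw [Set.indicator_of_mem (show g ∈ E from ⟨hk, hsub, hedge⟩)]
    rw [Finset.sum_eq_single_of_mem S₀ hmem ?_]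
    · have hgood : g ∈ {g | outComp N hN g = ↑S₀ ∧ ∀ u, u ∉ S₀ → g u ∈ BM N M u} := by
        refine ⟨hcoe.symm, fun u hu => ?_⟩
        unfold BM
        split
        · intro v hv
          refine hedge u (by assumption) (by rwa [hS₀, Set.Finite.mem_toFinset] at hu) v hv
        · trivial
      rw [Set.indicator_of_mem hgood]
    · intro S hS hne
      refine Set.indicator_of_notMem (show g ∉ {g | outComp N hN g = ↑S ∧
        ∀ u, u ∉ S → g u ∈ BM N M u} from fun hmm => ?_) _
      refine hne (Finset.coe_injective ?_)
      rw [hcoe, hmm.1]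
  · rw [Set.indicator_of_notMem hg]
    symm
    refine Finset.sum_eq_zero fun S hS => ?_
    refine Set.indicator_of_notMem (show g ∉ {g | outComp N hN g = ↑S ∧
      ∀ u, u ∉ S → g u ∈ BM N M u} from fun hmm => ?_) _
    rw [Finset.mem_filter] at hS
    obtain ⟨-, h0S, hcard, hSM⟩ := hS
    obtain ⟨hout, hBu⟩ := hmm
    refine hg ⟨?_, ?_, ?_⟩
    · rw [hout, Set.ncard_coe_finset, hcard]
    · rw [hout]
      intro v hv
      exact hSM v hv
    · intro u huM hunot
      have huS : u ∉ S := fun h => hunot (by rw [hout]; exact h)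
      have := hBu u huS
      unfold BM at this
      rw [if_pos huM] at this
      exact this

lemma PE_event_S {N : ℕ} (hN : 2 ≤ N) {p : ℕ → ℝ} (hp0 : ∀ ℓ, 0 ≤ p ℓ)
    (hpsum : ∑' ℓ, p ℓ = 1) (μ : ℝ → ℝ) (hμ : ∀ x, μ x = ∑' ℓ, p ℓ * x ^ ℓ)
    {M k : ℕ} (hk1 : 1 ≤ k) (hkM : k ≤ M) (hMN : M ≤ N)
    (S : Finset (Fin N)) (hcard : S.card = k) (hSM : ∀ v ∈ S, (v : ℕ) < M) :
    PE N p {g | outComp N (by omega) g = ↑S ∧ ∀ u, u ∉ S → g u ∈ BM N M u}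
      = PE N p {g | outComp N (by omega) g = ↑S}
          * (ENNReal.ofReal (μ (((M : ℝ) - 1) / ((N : ℝ) - 1)))) ^ (M - k) := by
  classical
  have hN0 : 0 < N := by omega
  set A : Set (Fin N → List (Fin N)) := {g | outComp N hN0 g = ↑S} with hA
  have hAagree : ∀ g g', (∀ u ∈ S, g u = g' u) → (g ∈ A ↔ g' ∈ A) := by
    intro g g' hgg'
    constructor
    · intro h
      exact outComp_agree hN0 ↑S g g' (fun u hu => hgg' u (Finset.mem_coe.1 hu)) h
    · intro h
      exact outComp_agree hN0 ↑S g' g (fun u hu => (hgg' u (Finset.mem_coe.1 hu)).symm) h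
  have h1 := split_core p S A hAagree (BM N M)
  have h2 := split_core p S A hAagree (fun _ => Set.univ)
  have hA2 : {g | g ∈ A ∧ ∀ u, u ∉ S → g u ∈ (fun _ : Fin N => (Set.univ : Set (List (Fin N)))) u}
      = A := by
    ext g
    simp
  rw [hA2] at h2
  have htot : ∀ u : {x : Fin N // ¬ x ∈ S},
      (∑' l : List (Fin N), Set.indicator (Set.univ : Set (List (Fin N))) (wgt N p u) l)
        = 1 := by
    intro u
    rw [show (∑' l : List (Fin N), Set.indicator (Set.univ : Set (List (Fin N))) (wgt N p u) l)
        = ∑' l : List (Fin N), wgt N p u l from tsum_congr fun l => by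
      rw [Set.indicator_of_mem (Set.mem_univ l)]]
    exact wgt_total hN hp0 hpsum u
  rw [Finset.prod_congr rfl (fun u _ => htot u), Finset.prod_const_one, mul_one] at h2
  have hBu : ∀ u : {x : Fin N // ¬ x ∈ S},
      (∑' l : List (Fin N), Set.indicator (BM N M u) (wgt N p u) l)
        = if ((u : Fin N) : ℕ) < M
            then ENNReal.ofReal (μ (((M : ℝ) - 1) / ((N : ℝ) - 1))) else 1 := by
    intro u
    by_cases hu : ((u : Fin N) : ℕ) < M
    · rw [if_pos hu, ← wgt_constrained hN hp0 hpsum (le_trans hk1 hkM) hMN μ hμ u hu]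
      refine tsum_congr fun l => ?_
      unfold BM
      rw [if_pos hu]
      by_cases hl : ∀ v ∈ l, (v : ℕ) < M
      · rw [Set.indicator_of_mem (show l ∈ {l : List (Fin N) | ∀ v ∈ l, (v : ℕ) < M} from hl),
          if_pos hl]
      · rw [Set.indicator_of_notMem
          (show l ∉ {l : List (Fin N) | ∀ v ∈ l, (v : ℕ) < M} from hl), if_neg hl]
    · rw [if_neg hu]
      rw [show (∑' l : List (Fin N), Set.indicator (BM N M u) (wgt N p u) l)
          = ∑' l : List (Fin N), wgt N p u l from tsum_congr fun l => by
        unfold BM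
        rw [if_neg hu]
        exact Set.indicator_of_mem (Set.mem_univ l) _]
      exact wgt_total hN hp0 hpsum u
  rw [Finset.prod_congr rfl (fun u _ => hBu u)] at h1
  have hprodcount : (∏ u : {x : Fin N // ¬ x ∈ S},
      if ((u : Fin N) : ℕ) < M
        then ENNReal.ofReal (μ (((M : ℝ) - 1) / ((N : ℝ) - 1))) else 1)
      = (ENNReal.ofReal (μ (((M : ℝ) - 1) / ((N : ℝ) - 1)))) ^ (M - k) := by
    rw [show (∏ u : {x : Fin N // ¬ x ∈ S},
        if ((u : Fin N) : ℕ) < M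
          then ENNReal.ofReal (μ (((M : ℝ) - 1) / ((N : ℝ) - 1))) else 1)
        = ∏ u ∈ Sᶜ, (if (u : ℕ) < M
            then ENNReal.ofReal (μ (((M : ℝ) - 1) / ((N : ℝ) - 1))) else 1) from
      (Finset.prod_subtype Sᶜ (fun x => Finset.mem_compl)
        (fun u : Fin N => if (u : ℕ) < M
          then ENNReal.ofReal (μ (((M : ℝ) - 1) / ((N : ℝ) - 1))) else 1)).symm]
    rw [Finset.prod_ite, Finset.prod_const, Finset.prod_const_one, mul_one]
    congr 1
    have hset : Sᶜ.filter (fun u : Fin N => (u : ℕ) < M)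
        = (Finset.univ.filter fun v : Fin N => (v : ℕ) < M) \ S := by
      ext u
      simp only [Finset.mem_filter, Finset.mem_compl, Finset.mem_sdiff, Finset.mem_univ,
        true_and]
      tauto
    rw [hset, Finset.card_sdiff_of_subset (fun v hv => by
      simp only [Finset.mem_filter, Finset.mem_univ, true_and]
      exact hSM v hv), card_allM hMN, hcard]
  rw [hprodcount] at h1
  rw [show {g | outComp N hN0 g = ↑S ∧ ∀ u, u ∉ S → g u ∈ BM N M u}
      = {g | g ∈ A ∧ ∀ u, u ∉ S → g u ∈ BM N M u} from rfl, h1, ← h2]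

end OCP

open OCP in
theorem outcomponent_contained_event_probability
    (N : ℕ) (hN : 2 ≤ N) (p : ℕ → ℝ)
    (hp0 : ∀ ℓ, 0 ≤ p ℓ) (hp1 : ∀ ℓ, p ℓ ≤ 1) (hpsum : ∑' ℓ, p ℓ = 1)
    (μ : ℝ → ℝ) (hμ : ∀ x, μ x = ∑' ℓ, p ℓ * x ^ ℓ)
    (M k : ℕ) (hk1 : 1 ≤ k) (hkM : k ≤ M) (hMN : M ≤ N) :
    graphProb N p
      {g | (outComp N (by omega) g).ncard = k ∧
           (outComp N (by omega) g) ⊆ {v : Fin N | (v : ℕ) < M} ∧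
           ∀ u : Fin N, (u : ℕ) < M → u ∉ outComp N (by omega) g →
             ∀ v ∈ g u, (v : ℕ) < M} =
      qProb N (by omega) p k *
        (μ (((M : ℝ) - 1) / ((N : ℝ) - 1))) ^ (M - k) *
        (((M - 1).choose (k - 1) : ℝ) / ((N - 1).choose (k - 1) : ℝ)) := by
  classical
  have hN0 : 0 < N := by omega
  have hM1 : 1 ≤ M := le_trans hk1 hkM
  have hkN : k ≤ N := le_trans hkM hMN
  set x : ℝ := ((M : ℝ) - 1) / ((N : ℝ) - 1) with hx
  have hNR : (0:ℝ) < (N:ℝ) - 1 := by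
    have : (2:ℝ) ≤ (N:ℝ) := by exact_mod_cast hN
    linarith
  have hx0 : 0 ≤ x := by
    apply div_nonneg _ hNR.le
    have : (1:ℝ) ≤ (M:ℝ) := by exact_mod_cast hM1
    linarith
  have hμx0 : 0 ≤ μ x := by
    rw [hμ x]
    exact tsum_nonneg fun n => mul_nonneg (hp0 n) (pow_nonneg hx0 n)
  set m : ℝ≥0∞ := ENNReal.ofReal (μ x) with hm
  -- canonical set S₀
  set S₀ : Finset (Fin N) := (Finset.range k).attachFin
    (fun mm hm => lt_of_lt_of_le (Finset.mem_range.1 hm) hkN) with hS₀def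
  have h0S₀ : (⟨0, hN0⟩ : Fin N) ∈ S₀ := by
    rw [hS₀def, Finset.mem_attachFin]
    exact Finset.mem_range.2 hk1
  have hcardS₀ : S₀.card = k := by
    rw [hS₀def, Finset.card_attachFin, Finset.card_range]
  set Φ : ℝ≥0∞ := PE N p {g | outComp N hN0 g = ↑S₀} with hΦ
  -- the q-side in ENNReal
  have hqE : PE N p {g | (outComp N hN0 g).ncard = k}
      = (((N - 1).choose (k - 1) : ℕ) : ℝ≥0∞) * Φ := by
    rw [decomp_q hN0 p k]
    rw [Finset.sum_congr rfl (fun S hS => PE_outComp_symm hN0 p S S₀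
      ((Finset.mem_filter.1 hS).2.1) h0S₀
      (by rw [(Finset.mem_filter.1 hS).2.2, hcardS₀]))]
    rw [Finset.sum_const, nsmul_eq_mul]
    congr 1
    have hcount := count_subsets (⟨0, hN0⟩ : Fin N) Finset.univ (Finset.mem_univ _) k hk1
    rw [Finset.card_univ, Fintype.card_fin] at hcount
    rw [show (Finset.univ.filter fun S : Finset (Fin N) => (⟨0, hN0⟩ : Fin N) ∈ S ∧ S.card = k)
        = Finset.univ.filter fun S : Finset (Fin N) =>
            (⟨0, hN0⟩ : Fin N) ∈ S ∧ S.card = k ∧ S ⊆ Finset.univ from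
      Finset.filter_congr fun S _ => by
        constructor
        · rintro ⟨h1, h2⟩
          exact ⟨h1, h2, Finset.subset_univ S⟩
        · rintro ⟨h1, h2, -⟩
          exact ⟨h1, h2⟩]
    rw [hcount]
  -- the L-side in ENNReal
  have hLE : PE N p {g | (outComp N hN0 g).ncard = k ∧
        (outComp N hN0 g) ⊆ {v : Fin N | (v : ℕ) < M} ∧
        ∀ u : Fin N, (u : ℕ) < M → u ∉ outComp N hN0 g → ∀ v ∈ g u, (v : ℕ) < M}
      = (((M - 1).choose (k - 1) : ℕ) : ℝ≥0∞) * (Φ * m ^ (M - k)) := by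
    rw [decomp_L hN0 p k M]
    have hterm : ∀ S ∈ Finset.univ.filter (fun S : Finset (Fin N) =>
        (⟨0, hN0⟩ : Fin N) ∈ S ∧ S.card = k ∧ ∀ v ∈ S, (v : ℕ) < M),
        PE N p {g | outComp N hN0 g = ↑S ∧ ∀ u, u ∉ S → g u ∈ BM N M u}
          = Φ * m ^ (M - k) := by
      intro S hS
      rw [Finset.mem_filter] at hS
      obtain ⟨-, h0S, hcardS, hSM⟩ := hS
      rw [show PE N p {g | outComp N hN0 g = ↑S ∧ ∀ u, u ∉ S → g u ∈ BM N M u}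
          = PE N p {g | outComp N hN0 g = ↑S} * m ^ (M - k) from
        PE_event_S hN hp0 hpsum μ hμ hk1 hkM hMN S hcardS hSM]
      rw [PE_outComp_symm hN0 p S S₀ h0S h0S₀ (by rw [hcardS, hcardS₀])]
    rw [Finset.sum_congr rfl hterm, Finset.sum_const, nsmul_eq_mul]
    congr 1
    have hmemM : (⟨0, hN0⟩ : Fin N) ∈ Finset.univ.filter (fun v : Fin N => (v : ℕ) < M) := by
      simp only [Finset.mem_filter, Finset.mem_univ, true_and]
      exact lt_of_lt_of_le hk1 hkM
    have hcount := count_subsets (⟨0, hN0⟩ : Fin N)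
      (Finset.univ.filter fun v : Fin N => (v : ℕ) < M) hmemM k hk1
    rw [card_allM hMN] at hcount
    rw [show (Finset.univ.filter fun S : Finset (Fin N) =>
          (⟨0, hN0⟩ : Fin N) ∈ S ∧ S.card = k ∧ ∀ v ∈ S, (v : ℕ) < M)
        = Finset.univ.filter fun S : Finset (Fin N) =>
            (⟨0, hN0⟩ : Fin N) ∈ S ∧ S.card = k ∧
              S ⊆ Finset.univ.filter fun v : Fin N => (v : ℕ) < M from
      Finset.filter_congr fun S _ => by
        constructor
        · rintro ⟨h1, h2, h3⟩
          refine ⟨h1, h2, fun v hv => ?_⟩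
          simp only [Finset.mem_filter, Finset.mem_univ, true_and]
          exact h3 v hv
        · rintro ⟨h1, h2, h3⟩
          refine ⟨h1, h2, fun v hv => ?_⟩
          have := h3 hv
          simp only [Finset.mem_filter, Finset.mem_univ, true_and] at this
          exact this]
    rw [hcount]
  -- pass to the reals
  have hΦtop : Φ ≠ ⊤ := PE_ne_top hN hp0 hpsum _
  have hqReal : qProb N hN0 p k = (((N - 1).choose (k - 1) : ℕ) : ℝ) * Φ.toReal := by
    rw [qProb, graphProb_eq hN hp0, hqE, ENNReal.toReal_mul, ENNReal.toReal_natCast]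
  have hLReal : graphProb N p
      {g | (outComp N hN0 g).ncard = k ∧
        (outComp N hN0 g) ⊆ {v : Fin N | (v : ℕ) < M} ∧
        ∀ u : Fin N, (u : ℕ) < M → u ∉ outComp N hN0 g → ∀ v ∈ g u, (v : ℕ) < M}
      = (((M - 1).choose (k - 1) : ℕ) : ℝ) * (Φ.toReal * (μ x) ^ (M - k)) := by
    rw [graphProb_eq hN hp0, hLE, ENNReal.toReal_mul, ENNReal.toReal_natCast,
      ENNReal.toReal_mul, ENNReal.toReal_pow, hm, ENNReal.toReal_ofReal hμx0]
  have hCN : (((N - 1).choose (k - 1) : ℕ) : ℝ) ≠ 0 := by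
    have : 0 < (N - 1).choose (k - 1) := Nat.choose_pos (by omega)
    positivity
  have goalEq : graphProb N p
      {g | (outComp N (by omega : 0 < N) g).ncard = k ∧
           (outComp N (by omega : 0 < N) g) ⊆ {v : Fin N | (v : ℕ) < M} ∧
           ∀ u : Fin N, (u : ℕ) < M → u ∉ outComp N (by omega : 0 < N) g →
             ∀ v ∈ g u, (v : ℕ) < M}
      = graphProb N p
      {g | (outComp N hN0 g).ncard = k ∧
           (outComp N hN0 g) ⊆ {v : Fin N | (v : ℕ) < M} ∧
           ∀ u : Fin N, (u : ℕ) < M → u ∉ outComp N hN0 g →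
             ∀ v ∈ g u, (v : ℕ) < M} := rfl
  rw [goalEq, hLReal, show qProb N (by omega : 0 < N) p k = qProb N hN0 p k from rfl, hqReal]
  field_simp
end
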